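/- arXiv:2305.15274 — 5 statements merged into one kernel-verified Lean document; each statement's English description precedes it below -/
import Mathlib

section
/- Suppose s ∈ (0,1) and f satisfies (f1)–(f2). Then there exists a constant C > 0 such that F(t) ≤ C( t^{2/s} + t^{2/s} Φ_{2,s}(α_* t^{2/(2−s)}) ) for all t > 0. -/
open MeasureTheory Real Filter

noncomputable section

abbrev E2 : Type := EuclideanSpace ℝ (Fin 2)

/-- Primitive of `f` vanishing at `0`. -/
def Fprim (f : ℝ → ℝ) (t : ℝ) : ℝ := ∫ r in (0:ℝ)..t, f r

/-- `j_{2/s}`, the least natural number `≥ 2/s`. -/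
def jmin (s : ℝ) : ℕ := sInf {j : ℕ | 2 / s ≤ (j : ℝ)}

/-- The truncated exponential `Φ_{2,s}(t) = e^t - Σ_{j=0}^{j_{2/s}-2} t^j/j!`. -/
def Phi2s (s t : ℝ) : ℝ :=
  Real.exp t - ∑ j ∈ Finset.range (jmin s - 1), t ^ j / (Nat.factorial j : ℝ)

/-- Assumption (f1). -/
def Cond_f1 (s : ℝ) (f : ℝ → ℝ) : Prop :=
  ContDiff ℝ 1 f ∧ (∀ t, 0 ≤ f t) ∧ (∀ t ≤ (0:ℝ), f t = 0) ∧
    Tendsto (fun t => f t / t ^ (2 / s - 1)) (nhdsWithin 0 (Set.Ioi 0)) (nhds 0)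

/-- Assumption (f2), with data `αstar`, `b₁`, `b₂`. -/
def Cond_f2 (s αstar b₁ b₂ : ℝ) (f : ℝ → ℝ) : Prop :=
  0 < αstar ∧ 0 < b₁ ∧ 0 < b₂ ∧
    ∀ t : ℝ, 0 < t → 0 < f t ∧ f t ≤ b₁ + b₂ * Phi2s s (αstar * t ^ (2 / (2 - s)))

/-- Membership in the fractional Sobolev space `W^{s,2/s}(ℝ²)`. -/
def MemW (s : ℝ) (u : E2 → ℝ) : Prop :=
  MemLp u (ENNReal.ofReal (2 / s)) volume ∧
    Integrable (fun p : E2 × E2 => |u p.1 - u p.2| ^ (2 / s) / ‖p.1 - p.2‖ ^ 4) volume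

/-- Weak solution of the Choquard equation (Ch_s). -/
def IsWeakSol (s : ℝ) (f : ℝ → ℝ) (u : E2 → ℝ) : Prop :=
  ∀ φ : E2 → ℝ, MemW s φ →
    (∫ x : E2, ∫ y : E2,
        |u x - u y| ^ (2 / s - 2) * (u x - u y) * (φ x - φ y) / ‖x - y‖ ^ 4)
      + (∫ x : E2, |u x| ^ (2 / s - 2) * u x * φ x)
    = (1 / (2 * π)) *
        ∫ x : E2, (∫ y : E2, Real.log (1 / ‖x - y‖) * Fprim f (u y)) * f (u x) * φ x


lemma truncExp_nonneg (n : ℕ) {x : ℝ} (hx : 0 ≤ x) :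
    0 ≤ Real.exp x - ∑ j ∈ Finset.range n, x ^ j / (Nat.factorial j : ℝ) :=
  sub_nonneg.2 (Real.sum_le_exp_of_nonneg hx n)

lemma hasDerivAt_truncExp (n : ℕ) (x : ℝ) :
    HasDerivAt (fun y => Real.exp y - ∑ j ∈ Finset.range (n+1), y ^ j / (Nat.factorial j : ℝ))
      (Real.exp x - ∑ j ∈ Finset.range n, x ^ j / (Nat.factorial j : ℝ)) x := by
  have hsum : HasDerivAt (fun y : ℝ => ∑ j ∈ Finset.range (n+1), y ^ j / (Nat.factorial j : ℝ))
      (∑ j ∈ Finset.range (n+1), (j : ℝ) * x ^ (j - 1) / (Nat.factorial j : ℝ)) x := by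
    apply HasDerivAt.fun_sum
    intro j _
    exact (hasDerivAt_pow j x).div_const _
  have heq : (∑ j ∈ Finset.range (n+1), (j : ℝ) * x ^ (j - 1) / (Nat.factorial j : ℝ))
      = ∑ j ∈ Finset.range n, x ^ j / (Nat.factorial j : ℝ) := by
    rw [Finset.sum_range_succ']
    simp only [Nat.cast_zero, Nat.factorial_zero, Nat.cast_one]
    rw [show ((0:ℝ) * x ^ (0-1) / 1) = 0 by ring, add_zero]
    apply Finset.sum_congr rfl
    intro j _
    have hfac : (Nat.factorial (j+1) : ℝ) = (j+1 : ℝ) * (Nat.factorial j : ℝ) := by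
      rw [Nat.factorial_succ]; push_cast; ring
    simp only [Nat.add_sub_cancel, hfac]
    have h1 : ((j:ℝ)+1) ≠ 0 := by positivity
    have h2 : (Nat.factorial j : ℝ) ≠ 0 := Nat.cast_ne_zero.2 (Nat.factorial_ne_zero j)
    push_cast
    field_simp
  exact (Real.hasDerivAt_exp x).sub (heq ▸ hsum)

lemma truncExp_mono (n : ℕ) :
    MonotoneOn (fun x => Real.exp x - ∑ j ∈ Finset.range n, x ^ j / (Nat.factorial j : ℝ))
      (Set.Ici (0:ℝ)) := by
  cases n with
  | zero =>
    simpa using (Real.exp_monotone.monotoneOn (Set.Ici (0:ℝ)))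
  | succ m =>
    apply monotoneOn_of_deriv_nonneg (convex_Ici 0)
    · exact (Real.continuous_exp.sub (by continuity)).continuousOn
    · intro x _
      exact (hasDerivAt_truncExp m x).differentiableAt.differentiableWithinAt
    · intro x hx
      rw [interior_Ici] at hx
      rw [(hasDerivAt_truncExp m x).deriv]
      exact truncExp_nonneg m hx.le

lemma Phi2s_nonneg (s : ℝ) {x : ℝ} (hx : 0 ≤ x) : 0 ≤ Phi2s s x :=
  truncExp_nonneg _ hx

lemma Phi2s_mono (s : ℝ) {a b : ℝ} (ha : 0 ≤ a) (hab : a ≤ b) : Phi2s s a ≤ Phi2s s b :=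
  truncExp_mono _ ha (le_trans ha hab) hab

theorem statement_10 (s : ℝ) (hs : s ∈ Set.Ioo (0:ℝ) 1)
    (f : ℝ → ℝ) (αstar b₁ b₂ : ℝ)
    (hf1 : Cond_f1 s f) (hf2 : Cond_f2 s αstar b₁ b₂ f) :
    ∃ C : ℝ, 0 < C ∧ ∀ t : ℝ, 0 < t →
      Fprim f t ≤ C * (t ^ (2 / s) + t ^ (2 / s) * Phi2s s (αstar * t ^ (2 / (2 - s)))) := by
  obtain ⟨hs0, hs1⟩ := hs
  obtain ⟨hfC1, hfnn, hf0, hflim⟩ := hf1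
  obtain ⟨hα, hb1, hb2, hfb⟩ := hf2
  have hcont : Continuous f := hfC1.continuous
  have h2s : (2:ℝ) < 2 / s := by
    rw [lt_div_iff₀ hs0]; nlinarith
  have hp : (0:ℝ) < 2 / (2 - s) := by
    apply div_pos (by norm_num); linarith
  -- extract δ from the limit
  rw [Metric.tendsto_nhdsWithin_nhds] at hflim
  obtain ⟨δ, hδ0, hδ⟩ := hflim 1 one_pos
  -- small t bound : for 0 < t < δ, f r ≤ t^(2/s-1) on [0,t]
  have hsmall : ∀ t : ℝ, 0 < t → t < δ → Fprim f t ≤ t ^ (2/s) := by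
    intro t ht htδ
    have hbound : ∀ r ∈ Set.Icc (0:ℝ) t, f r ≤ t ^ (2/s - 1) := by
      intro r ⟨hr0, hrt⟩
      rcases eq_or_lt_of_le hr0 with h | h
      · rw [hf0 r h.symm.le]
        exact Real.rpow_nonneg ht.le _
      · have hrδ : dist r 0 < δ := by
          rw [Real.dist_eq, sub_zero, abs_of_pos h]; linarith
        have := hδ h hrδ
        rw [Real.dist_eq, sub_zero] at this
        have hrp : (0:ℝ) < r ^ (2/s - 1) := Real.rpow_pos_of_pos h _
        have hfr : f r < r ^ (2/s - 1) := by
          have habs : f r / r ^ (2/s-1) < 1 := lt_of_abs_lt this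
          calc f r = (f r / r ^ (2/s-1)) * r ^ (2/s-1) := by field_simp
            _ < 1 * r ^ (2/s-1) := by exact mul_lt_mul_of_pos_right habs hrp
            _ = r ^ (2/s-1) := one_mul _
        have hmono : r ^ (2/s-1) ≤ t ^ (2/s-1) :=
          Real.rpow_le_rpow h.le hrt (by linarith)
        linarith
    have hint : Fprim f t ≤ ∫ _ in (0:ℝ)..t, t ^ (2/s - 1) := by
      apply intervalIntegral.integral_mono_on ht.le
        (hcont.intervalIntegrable 0 t) (intervalIntegrable_const)
      intro x hx
      exact hbound x hx
    rw [intervalIntegral.integral_const, smul_eq_mul, sub_zero] at hint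
    calc Fprim f t ≤ t * t ^ (2/s - 1) := hint
      _ = t ^ (2/s) := by
        have : t ^ (2/s) = t ^ ((1:ℝ) + (2/s - 1)) := by norm_num
        rw [this, Real.rpow_add ht, Real.rpow_one]
  -- general bound : Fprim f t ≤ t * (b₁ + b₂ * Phi2s s (αstar * t^p))
  have hgen : ∀ t : ℝ, 0 < t →
      Fprim f t ≤ t * (b₁ + b₂ * Phi2s s (αstar * t ^ (2/(2-s)))) := by
    intro t ht
    set M := b₁ + b₂ * Phi2s s (αstar * t ^ (2/(2-s))) with hM
    have hPhit : 0 ≤ Phi2s s (αstar * t ^ (2/(2-s))) :=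
      Phi2s_nonneg s (by positivity)
    have hM0 : 0 ≤ M := by positivity
    have hbound : ∀ r ∈ Set.Icc (0:ℝ) t, f r ≤ M := by
      intro r ⟨hr0, hrt⟩
      rcases eq_or_lt_of_le hr0 with h | h
      · rw [hf0 r h.symm.le]; exact hM0
      · have h1 := (hfb r h).2
        have harg : αstar * r ^ (2/(2-s)) ≤ αstar * t ^ (2/(2-s)) := by
          apply mul_le_mul_of_nonneg_left _ hα.le
          exact Real.rpow_le_rpow h.le hrt hp.le
        have h2 : Phi2s s (αstar * r ^ (2/(2-s))) ≤ Phi2s s (αstar * t ^ (2/(2-s))) :=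
          Phi2s_mono s (by positivity) harg
        rw [hM]
        nlinarith
    have hint : Fprim f t ≤ ∫ _ in (0:ℝ)..t, M := by
      apply intervalIntegral.integral_mono_on ht.le
        (hcont.intervalIntegrable 0 t) (intervalIntegrable_const)
      intro x hx
      exact hbound x hx
    rw [intervalIntegral.integral_const, smul_eq_mul, sub_zero] at hint
    exact hint
  -- constant
  have hδpow : (0:ℝ) < δ ^ (2/s - 1) := Real.rpow_pos_of_pos hδ0 _
  set K := (δ ^ (2/s - 1))⁻¹ with hK
  have hK0 : 0 < K := inv_pos.2 hδpow
  refine ⟨max 1 (max (b₁ * K) (b₂ * K)), lt_max_of_lt_left one_pos, ?_⟩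
  intro t ht
  set C := max 1 (max (b₁ * K) (b₂ * K)) with hC
  have hC1 : (1:ℝ) ≤ C := le_max_left _ _
  have hCb1 : b₁ * K ≤ C := le_trans (le_max_left _ _) (le_max_right _ _)
  have hCb2 : b₂ * K ≤ C := le_trans (le_max_right _ _) (le_max_right _ _)
  have hPhit : 0 ≤ Phi2s s (αstar * t ^ (2/(2-s))) := Phi2s_nonneg s (by positivity)
  have htpow : (0:ℝ) < t ^ (2/s) := Real.rpow_pos_of_pos ht _
  rcases lt_or_ge t δ with hlt | hge
  · calc Fprim f t ≤ t ^ (2/s) := hsmall t ht hlt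
      _ ≤ C * (t ^ (2/s) + t ^ (2/s) * Phi2s s (αstar * t ^ (2/(2-s)))) := by
        nlinarith [mul_le_mul_of_nonneg_right hC1 htpow.le,
          mul_nonneg (le_trans zero_le_one hC1) (mul_nonneg htpow.le hPhit)]
  · -- t ≥ δ : t ≤ K * t^(2/s)
    have hmono : δ ^ (2/s - 1) ≤ t ^ (2/s - 1) :=
      Real.rpow_le_rpow hδ0.le hge (by linarith)
    have htK : t ≤ K * t ^ (2/s) := by
      have ht2 : t * t ^ (2/s - 1) = t ^ (2/s) := by
        have : t ^ (2/s) = t ^ ((1:ℝ) + (2/s - 1)) := by norm_num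
        rw [this, Real.rpow_add ht, Real.rpow_one]
      have h3 : t * δ ^ (2/s - 1) ≤ t ^ (2/s) := by
        nlinarith [mul_le_mul_of_nonneg_left hmono ht.le]
      rw [hK, inv_mul_eq_div, le_div_iff₀ hδpow]
      linarith
    calc Fprim f t ≤ t * (b₁ + b₂ * Phi2s s (αstar * t ^ (2/(2-s)))) := hgen t ht
      _ ≤ (K * t ^ (2/s)) * (b₁ + b₂ * Phi2s s (αstar * t ^ (2/(2-s)))) := by
        apply mul_le_mul_of_nonneg_right htK
        positivity
      _ = (b₁ * K) * t ^ (2/s) + (b₂ * K) * (t ^ (2/s) * Phi2s s (αstar * t ^ (2/(2-s)))) := by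
        ring
      _ ≤ C * t ^ (2/s) + C * (t ^ (2/s) * Phi2s s (αstar * t ^ (2/(2-s)))) := by
        have h1 : 0 ≤ t ^ (2/s) * Phi2s s (αstar * t ^ (2/(2-s))) := by positivity
        have := mul_le_mul_of_nonneg_right hCb1 htpow.le
        have := mul_le_mul_of_nonneg_right hCb2 h1
        linarith
      _ = C * (t ^ (2/s) + t ^ (2/s) * Phi2s s (αstar * t ^ (2/(2-s)))) := by ring
end
end

section
/- Let s ∈ (0,1) and τ ∈ (0,s). Suppose f ∈ C¹(ℝ) satisfies f(t) = 0 for t ≤ 0 and f(t) > 0 for t > 0, and let F(t) := ∫₀ᵗ f(τ') dτ'. If F(t) f'(t) / f(t)² ≥ 1 − s + τ for every t > 0, then F(t) ≤ (s − τ) t f(t) for every t ≥ 0. -/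
open MeasureTheory Real Filter

noncomputable section

theorem statement_11 (s τ : ℝ) (hs : s ∈ Set.Ioo (0:ℝ) 1) (hτ : τ ∈ Set.Ioo (0:ℝ) s)
    (f : ℝ → ℝ) (hf : ContDiff ℝ 1 f)
    (hf0 : ∀ t ≤ (0:ℝ), f t = 0) (hfpos : ∀ t : ℝ, 0 < t → 0 < f t)
    (hratio : ∀ t : ℝ, 0 < t → 1 - s + τ ≤ Fprim f t * deriv f t / (f t) ^ 2) :
    ∀ t : ℝ, 0 ≤ t → Fprim f t ≤ (s - τ) * t * f t := by
  obtain ⟨hs0, hs1⟩ := hs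
  obtain ⟨hτ0, hτs⟩ := hτ
  have hst : 0 < s - τ := by linarith
  have hfc : Continuous f := hf.continuous
  have hF : ∀ t : ℝ, HasDerivAt (Fprim f) (f t) t := fun t =>
    intervalIntegral.integral_hasDerivAt_right (hfc.intervalIntegrable 0 t)
      (hfc.stronglyMeasurableAtFilter volume (nhds t)) hfc.continuousAt
  have hF0 : Fprim f 0 = 0 := intervalIntegral.integral_same
  have hFpos : ∀ t : ℝ, 0 < t → 0 < Fprim f t := fun t ht =>
    intervalIntegral.intervalIntegral_pos_of_pos_on (hfc.intervalIntegrable 0 t)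
      (fun x hx => hfpos x hx.1) ht
  intro t ht
  rcases eq_or_lt_of_le ht with h | h
  · simp [← h, hF0]
  by_contra hcon
  push_neg at hcon
  set g : ℝ → ℝ := fun x => Fprim f x / f x with hg
  have hgd : ∀ x ∈ Set.Ioi (0:ℝ),
      HasDerivAt g ((f x * f x - Fprim f x * deriv f x) / (f x) ^ 2) x := by
    intro x hx
    exact (hF x).div ((hf.differentiable one_ne_zero x).hasDerivAt) (ne_of_gt (hfpos x hx))
  set ψ : ℝ → ℝ := fun x => g x - (s - τ) * x with hψ
  have hψd : ∀ x ∈ Set.Ioi (0:ℝ),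
      HasDerivAt ψ ((f x * f x - Fprim f x * deriv f x) / (f x) ^ 2 - (s - τ)) x := by
    intro x hx
    have hlin : HasDerivAt (fun y : ℝ => (s - τ) * y) (s - τ) x := by
      simpa using (hasDerivAt_id x).const_mul (s - τ)
    exact (hgd x hx).sub hlin
  have hψ' : ∀ x ∈ Set.Ioi (0:ℝ), deriv ψ x ≤ 0 := by
    intro x hx
    rw [(hψd x hx).deriv]
    have hfx := hfpos x hx
    have h2 : (f x * f x - Fprim f x * deriv f x) / (f x) ^ 2
        = 1 - Fprim f x * deriv f x / (f x) ^ 2 := by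
      field_simp
    rw [h2]
    have := hratio x hx
    linarith
  have hψanti : AntitoneOn ψ (Set.Ioi (0:ℝ)) := by
    apply antitoneOn_of_deriv_nonpos (convex_Ioi 0)
    · exact fun x hx => (hψd x hx).continuousAt.continuousWithinAt
    · rw [interior_Ioi]
      exact fun x hx => (hψd x hx).differentiableAt.differentiableWithinAt
    · rw [interior_Ioi]; exact hψ'
  set c : ℝ := ψ t with hc
  have hcpos : 0 < c := by
    have : (s - τ) * t < Fprim f t / f t := by
      rw [lt_div_iff₀ (hfpos t h)]
      linarith [hcon]
    simp only [hc, hψ, hg]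
    linarith
  have hlow : ∀ ε ∈ Set.Ioc (0:ℝ) t, c * f ε ≤ Fprim f ε := by
    intro ε hε
    have hψε : ψ t ≤ ψ ε := hψanti hε.1 h hε.2
    have hgε : c ≤ g ε := by
      have : 0 ≤ (s - τ) * ε := le_of_lt (mul_pos hst hε.1)
      have hct : c = g t - (s - τ) * t := by simp [hc, hψ]
      simp only [hψ] at hψε
      linarith
    have := (le_div_iff₀ (hfpos ε hε.1)).mp hgε
    simpa [hg] using this
  set hfun : ℝ → ℝ := fun x => Fprim f x * Real.exp (-x / c) with hhfun
  have hhd : ∀ x : ℝ, HasDerivAt hfun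
      (f x * Real.exp (-x / c) + Fprim f x * (Real.exp (-x / c) * (-1 / c))) x := by
    intro x
    have he : HasDerivAt (fun y : ℝ => Real.exp (-y / c)) (Real.exp (-x / c) * (-1 / c)) x := by
      have hin : HasDerivAt (fun y : ℝ => -y / c) (-1 / c) x := by
        simpa using ((hasDerivAt_id x).neg.div_const c)
      simpa using hin.exp
    exact (hF x).mul he
  have hanti : AntitoneOn hfun (Set.Icc 0 t) := by
    apply antitoneOn_of_deriv_nonpos (convex_Icc 0 t)
    · exact fun x hx => (hhd x).continuousAt.continuousWithinAt
    · rw [interior_Icc]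
      exact fun x hx => (hhd x).differentiableAt.differentiableWithinAt
    · rw [interior_Icc]
      intro x hx
      rw [(hhd x).deriv]
      have hle : c * f x ≤ Fprim f x := hlow x ⟨hx.1, le_of_lt hx.2⟩
      have hexp : 0 < Real.exp (-x / c) := Real.exp_pos _
      have : f x * Real.exp (-x / c) + Fprim f x * (Real.exp (-x / c) * (-1 / c))
          = (f x - Fprim f x / c) * Real.exp (-x / c) := by
        field_simp
        ring
      rw [this]
      apply mul_nonpos_of_nonpos_of_nonneg _ (le_of_lt hexp)
      have : f x ≤ Fprim f x / c := by
        rw [le_div_iff₀ hcpos]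
        linarith
      linarith
  have h0 : hfun 0 = 0 := by simp [hhfun, hF0]
  have htpos : 0 < hfun t := mul_pos (hFpos t h) (Real.exp_pos _)
  have := hanti (Set.left_mem_Icc.mpr (le_of_lt h)) ⟨le_of_lt h, le_rfl⟩ (le_of_lt h)
  rw [h0] at this
  linarith
end
end

section
/- Let q > 1 be a real number, let N = ⌊q⌋ be the largest integer strictly less than q, and set q! := q(q−1)⋯(q−N), i.e. the product of the factors q − i for i = 0, 1, …, N. Then for every W ∈ [0,1): (1+W)^q − W − 1 ≤ ( q! / (q − N) ) · W / (1 − W). -/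
open Real

noncomputable section

/-- Largest integer strictly less than `q` (as a natural number), for `q > 1`. -/
def genFloor (q : ℝ) : ℕ := (⌈q⌉ - 1).toNat

/-- Generalized factorial `q! = q(q-1)⋯(q-⌊q⌋)`. -/
def genFact (q : ℝ) : ℝ := ∏ i ∈ Finset.range (genFloor q + 1), (q - (i : ℝ))

/-- Key induction: `(1+W)^(n+1) - 1 ≤ (n+1)! * (W/(1-W))` for `W ∈ [0,1)`. -/
lemma aux_pow_le {W : ℝ} (hW0 : 0 ≤ W) (hW1 : W < 1) :
    ∀ n : ℕ, (1 + W) ^ (n + 1) - 1 ≤ ((n + 1).factorial : ℝ) * (W / (1 - W)) := by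
  have h1W : (0:ℝ) < 1 - W := by linarith
  have hS : W ≤ W / (1 - W) := by
    rw [le_div_iff₀ h1W]; nlinarith
  have hSW : W / (1 - W) * W + W = W / (1 - W) := by
    field_simp
    ring
  intro n
  induction n with
  | zero => simpa using hS
  | succ n ih =>
    have hpow : (1:ℝ) ≤ (1 + W) ^ (n + 1) := one_le_pow₀ (by linarith)
    have hF : (1:ℝ) ≤ ((n + 1).factorial : ℝ) := by
      exact_mod_cast Nat.one_le_iff_ne_zero.mpr (Nat.factorial_ne_zero _)
    have hSnn : 0 ≤ W / (1 - W) := div_nonneg hW0 h1W.le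
    have hstep : (1 + W) ^ (n + 2) - 1 = ((1 + W) ^ (n + 1) - 1) * (1 + W) + W := by
      ring
    have h2 : ((1 + W) ^ (n + 1) - 1) * (1 + W)
        ≤ ((n + 1).factorial : ℝ) * (W / (1 - W)) * (1 + W) := by
      apply mul_le_mul_of_nonneg_right ih (by linarith)
    have hfact : ((n + 2).factorial : ℝ) = (n + 2) * ((n + 1).factorial : ℝ) := by
      rw [show n + 2 = (n + 1) + 1 from rfl, Nat.factorial_succ]
      push_cast; ring
    calc (1 + W) ^ (n + 1 + 1) - 1
        = ((1 + W) ^ (n + 1) - 1) * (1 + W) + W := by ring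
      _ ≤ ((n + 1).factorial : ℝ) * (W / (1 - W)) * (1 + W) + W := by linarith
      _ = ((n + 1).factorial : ℝ) * (W / (1 - W))
            + (((n + 1).factorial : ℝ) * (W / (1 - W) * W) + W) := by ring
      _ ≤ ((n + 1).factorial : ℝ) * (W / (1 - W))
            + (((n + 1).factorial : ℝ) * (W / (1 - W) * W)
              + ((n + 1).factorial : ℝ) * W) := by nlinarith
      _ = 2 * (((n + 1).factorial : ℝ) * (W / (1 - W))) := by
            linear_combination ((n + 1).factorial : ℝ) * hSW
      _ ≤ ((n + 1 + 1).factorial : ℝ) * (W / (1 - W)) := by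
            rw [show n + 1 + 1 = n + 2 from rfl, hfact]
            have hn2 : (2:ℝ) ≤ (n:ℝ) + 2 := by
              have : (0:ℝ) ≤ (n:ℝ) := Nat.cast_nonneg n
              linarith
            nlinarith
  

/-- `(m+1)! ≤ ∏_{i<m} (x - i)` when `m + 1 ≤ x`. -/
lemma aux_fact_le : ∀ (m : ℕ) (x : ℝ), (m : ℝ) + 1 ≤ x →
    ((m + 1).factorial : ℝ) ≤ ∏ i ∈ Finset.range m, (x - (i : ℝ)) := by
  intro m
  induction m with
  | zero => intro x hx; simp
  | succ m ih =>
    intro x hx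
    have hx' : (m : ℝ) + 1 ≤ x - 1 := by push_cast at hx ⊢; linarith
    have h1 := ih (x - 1) hx'
    rw [Finset.prod_range_succ']
    have hprod : (∏ i ∈ Finset.range m, (x - ((i + 1 : ℕ) : ℝ)))
        = ∏ i ∈ Finset.range m, ((x - 1) - (i : ℝ)) := by
      apply Finset.prod_congr rfl
      intro i _
      push_cast; ring
    rw [hprod]
    have hfpos : (0:ℝ) < ((m + 1).factorial : ℝ) := by positivity
    have hx2 : ((m:ℝ)) + 2 ≤ x := by push_cast at hx ⊢; linarith
    have hprodpos : (0:ℝ) ≤ ∏ i ∈ Finset.range m, ((x - 1) - (i : ℝ)) :=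
      le_trans hfpos.le h1
    calc ((m + 1 + 1).factorial : ℝ) = ((m + 2) : ℝ) * ((m + 1).factorial : ℝ) := by
          rw [show m + 1 + 1 = (m + 1) + 1 from rfl, Nat.factorial_succ]; push_cast; ring
      _ ≤ ((m + 2) : ℝ) * ∏ i ∈ Finset.range m, ((x - 1) - (i : ℝ)) := by
          apply mul_le_mul_of_nonneg_left h1 (by positivity)
      _ ≤ x * ∏ i ∈ Finset.range m, ((x - 1) - (i : ℝ)) := by
          apply mul_le_mul_of_nonneg_right _ hprodpos
          linarith
      _ = (∏ i ∈ Finset.range m, ((x - 1) - (i : ℝ))) * (x - (0 : ℕ)) := by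
          push_cast; ring

theorem statement_15 (q : ℝ) (hq : 1 < q) :
    ∀ W ∈ Set.Ico (0:ℝ) 1,
      (1 + W) ^ q - W - 1 ≤ genFact q / (q - (genFloor q : ℝ)) * W / (1 - W) := by
  intro W hW
  obtain ⟨hW0, hW1⟩ := hW
  set N := genFloor q with hNdef
  -- basic facts about N
  have hceil2 : (2 : ℤ) ≤ ⌈q⌉ := by
    have h : (1:ℝ) < (⌈q⌉ : ℝ) := lt_of_lt_of_le hq (Int.le_ceil q)
    have h2 : (1:ℤ) < ⌈q⌉ := by exact_mod_cast h
    omega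
  have hN1 : 1 ≤ N := by
    have : (1:ℤ) ≤ ⌈q⌉ - 1 := by omega
    simpa [hNdef, genFloor] using Int.toNat_le_toNat this
  have hNcast : ((N : ℤ) : ℝ) = (⌈q⌉ : ℝ) - 1 := by
    have : (N : ℤ) = ⌈q⌉ - 1 := Int.toNat_of_nonneg (by omega)
    rw [this]; push_cast; ring
  have hNq : (N : ℝ) < q := by
    have h := Int.ceil_lt_add_one q
    have : ((N : ℤ) : ℝ) < q := by
      rw [hNcast]; linarith
    exact_mod_cast this
  have hqN1 : q ≤ (N : ℝ) + 1 := by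
    have h := Int.le_ceil q
    have : ((N : ℤ) : ℝ) + 1 = (⌈q⌉ : ℝ) := by rw [hNcast]; ring
    have h2 : q ≤ ((N : ℤ) : ℝ) + 1 := by rw [this]; exact h
    exact_mod_cast h2
  set r := q - (N : ℝ) with hrdef
  have hr0 : 0 < r := by simp [hrdef]; linarith
  have hr1 : r ≤ 1 := by simp [hrdef]; linarith
  have h1W : (0:ℝ) < 1 - W := by linarith
  set S := W / (1 - W) with hSdef
  have hSnn : 0 ≤ S := div_nonneg hW0 h1W.le
  -- C = genFact q / (q - N)
  have hgf : genFact q = (∏ i ∈ Finset.range N, (q - (i : ℝ))) * (q - (N : ℝ)) := by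
    rw [genFact, Finset.prod_range_succ]
  set C := ∏ i ∈ Finset.range N, (q - (i : ℝ)) with hCdef
  have hCq : genFact q / (q - (N : ℝ)) = C := by
    rw [hgf]; exact mul_div_cancel_right₀ C (sub_ne_zero.mpr hNq.ne')
  -- C = D * (1 + r)
  obtain ⟨M, hM⟩ : ∃ M, N = M + 1 := ⟨N - 1, by omega⟩
  set D := ∏ i ∈ Finset.range M, (q - (i : ℝ)) with hDdef
  have hCD : C = D * (1 + r) := by
    rw [hCdef, hM, Finset.prod_range_succ]
    have : q - (M : ℝ) = 1 + r := by
      rw [hrdef, hM]; push_cast; ring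
    rw [this]
  -- N! ≤ D
  have hMq : (M : ℝ) + 1 ≤ q := by
    have : ((M : ℝ) + 1) = (N : ℝ) := by rw [hM]; push_cast; ring
    rw [this]; exact hNq.le
  have hfD : ((M + 1).factorial : ℝ) ≤ D := aux_fact_le M q hMq
  have hfN : ((N).factorial : ℝ) ≤ D := by rw [hM]; exact hfD
  -- step 1 : (1+W)^q ≤ (1+W)^N * (1 + r*W)
  have h1Wpos : (0:ℝ) < 1 + W := by linarith
  have hrpow : (1 + W) ^ q = (1 + W) ^ (N : ℕ) * (1 + W) ^ r := by
    rw [← Real.rpow_natCast (1 + W) N, ← Real.rpow_add h1Wpos]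
    congr 1
    rw [hrdef]; ring
  have hbern : (1 + W) ^ r ≤ 1 + r * W :=
    rpow_one_add_le_one_add_mul_self (by linarith) hr0.le hr1
  have hpowN : (1:ℝ) ≤ (1 + W) ^ (N : ℕ) := one_le_pow₀ (by linarith)
  have step1 : (1 + W) ^ q ≤ (1 + W) ^ (N : ℕ) * (1 + r * W) := by
    rw [hrpow]
    apply mul_le_mul_of_nonneg_left hbern (by positivity)
  -- step 2
  have step2 : (1 + W) ^ (N : ℕ) * (1 + r * W) - 1 - W
      ≤ ((1 + W) ^ (N : ℕ) - 1) * (1 + r) := by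
    nlinarith [mul_nonneg (mul_nonneg hr0.le (sub_nonneg.mpr hpowN)) (by linarith : (0:ℝ) ≤ 1 - W),
      mul_nonneg hW0 (by linarith : (0:ℝ) ≤ 1 - r)]
  -- step 3 : (1+W)^N - 1 ≤ N! * S
  have step3 : (1 + W) ^ (N : ℕ) - 1 ≤ ((N).factorial : ℝ) * S := by
    have := aux_pow_le hW0 hW1 M
    rw [← hM] at this
    exact this
  -- assemble
  have hfin : (1 + W) ^ q - W - 1 ≤ C * S := by
    have h4 : ((1 + W) ^ (N : ℕ) - 1) * (1 + r) ≤ ((N).factorial : ℝ) * S * (1 + r) :=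
      mul_le_mul_of_nonneg_right step3 (by linarith)
    have h5 : ((N).factorial : ℝ) * S * (1 + r) ≤ D * (1 + r) * S := by
      have := mul_le_mul_of_nonneg_right hfN (mul_nonneg hSnn (by linarith : (0:ℝ) ≤ 1 + r))
      calc ((N).factorial : ℝ) * S * (1 + r) = ((N).factorial : ℝ) * (S * (1 + r)) := by ring
        _ ≤ D * (S * (1 + r)) := this
        _ = D * (1 + r) * S := by ring
    rw [hCD]
    linarith [step1, step2]
  calc (1 + W) ^ q - W - 1 ≤ C * S := hfin
    _ = genFact q / (q - (N : ℝ)) * W / (1 - W) := by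
        rw [hCq, hSdef, mul_div_assoc]
end
end

section
/- Let s ∈ (0,1) and R > 0, and let w̄ be the tent function on ℝ². Then ∫_{ℝ²} |w̄(x)|^{2/s} dx = (π R²/4) · ( 1 + s(2+3s)/((2+s)(1+s)) ). -/
open MeasureTheory Real Filter

noncomputable section

/-- The tent function on `ℝ²`. -/
def tent (R : ℝ) (x : E2) : ℝ :=
  if ‖x‖ ≤ R / 2 then 1 else if ‖x‖ < R then 2 - (2 / R) * ‖x‖ else 0

theorem statement_16 (s R : ℝ) (hs : s ∈ Set.Ioo (0:ℝ) 1) (hR : 0 < R) :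
    (∫ x : E2, |tent R x| ^ (2 / s)) =
      π * R ^ 2 / 4 * (1 + s * (2 + 3 * s) / ((2 + s) * (1 + s))) := by
  obtain ⟨hs0, hs1⟩ := hs
  set p : ℝ := 2 / s with hp
  have hp2 : 2 < p := by rw [hp, lt_div_iff₀ hs0]; linarith
  have hp0 : 0 < p := by linarith
  have hR2 : (0:ℝ) < R / 2 := by linarith
  set g : ℝ → ℝ :=
    fun r => |if r ≤ R / 2 then (1:ℝ) else if r < R then 2 - 2 / R * r else 0| ^ p with hg
  have h0 : (∫ x : E2, |tent R x| ^ (2 / s)) = ∫ x : E2, g ‖x‖ := rfl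
  rw [h0, MeasureTheory.integral_fun_norm_addHaar volume g]
  have hdim : Module.finrank ℝ E2 = 2 := finrank_euclideanSpace_fin
  rw [hdim]
  have hball : (volume (Metric.ball (0:E2) 1)).toReal = π := by
    rw [EuclideanSpace.volume_ball]
    simp only [Fintype.card_fin, Nat.cast_ofNat]
    rw [show ((2:ℝ)/2 + 1) = 2 by norm_num, Real.Gamma_two]
    rw [Real.sq_sqrt Real.pi_nonneg]
    simp [ENNReal.toReal_ofReal Real.pi_nonneg]
  rw [measureReal_def, hball]
  simp only [smul_eq_mul, nsmul_eq_mul, Nat.cast_ofNat]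
  rw [show (2:ℕ) - 1 = 1 by rfl]
  simp only [pow_one]
  -- bound: g ≤ 1
  have hg1 : ∀ r : ℝ, g r ≤ 1 := by
    intro r
    apply Real.rpow_le_one (abs_nonneg _) ?_ hp0.le
    split_ifs with h1 h2
    · simp
    · push_neg at h1
      have hlt : 2 / R * r < 2 := by
        rw [div_mul_eq_mul_div, div_lt_iff₀ hR]; linarith
      have hge : 1 ≤ 2 / R * r := by
        rw [div_mul_eq_mul_div, le_div_iff₀ hR]; linarith
      rw [abs_of_nonneg (by linarith)]; linarith
    · simp
  have hg0 : ∀ r : ℝ, 0 ≤ g r := fun r => Real.rpow_nonneg (abs_nonneg _) _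
  have hmeas : Measurable g := by
    apply Measurable.pow_const
    apply Measurable.abs
    apply Measurable.ite (measurableSet_le measurable_id measurable_const) measurable_const
    apply Measurable.ite (measurableSet_lt measurable_id measurable_const) ?_ measurable_const
    exact (measurable_const.sub (measurable_const.mul measurable_id))
  have hIntOn : MeasureTheory.IntegrableOn (fun y => y * g y) (Set.Ioc 0 R) volume := by
    apply MeasureTheory.Measure.integrableOn_of_bounded (M := R * 1)
      (measure_Ioc_lt_top.ne) ((measurable_id.mul hmeas).aestronglyMeasurable)
    filter_upwards [MeasureTheory.ae_restrict_mem measurableSet_Ioc] with y hy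
    simp only [Pi.mul_apply, id_eq, Real.norm_eq_abs]
    rw [abs_of_nonneg (mul_nonneg hy.1.le (hg0 y))]
    exact mul_le_mul hy.2 (hg1 y) (hg0 y) hR.le
  -- split Ioi 0 into Ioc 0 R and Ioi R
  have hzero : ∫ y in Set.Ioi R, y * g y = 0 := by
    rw [MeasureTheory.setIntegral_congr_fun measurableSet_Ioi
      (g := fun _ => (0:ℝ)) ?_, MeasureTheory.integral_zero]
    intro y hy
    have hy1 : ¬ y ≤ R / 2 := by simp only [Set.mem_Ioi] at hy; push_neg; linarith
    have hy2 : ¬ y < R := by simp only [Set.mem_Ioi] at hy; push_neg; linarith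
    simp only [hg, hy1, hy2, if_false, abs_zero]
    rw [Real.zero_rpow hp0.ne']; ring
  have hsplit : ∫ y in Set.Ioi (0:ℝ), y * g y = ∫ y in Set.Ioc 0 R, y * g y := by
    rw [← Set.Ioc_union_Ioi_eq_Ioi hR.le,
      MeasureTheory.setIntegral_union (Set.Ioc_disjoint_Ioi le_rfl) measurableSet_Ioi hIntOn ?_,
      hzero, add_zero]
    · apply MeasureTheory.IntegrableOn.congr_fun (f := fun _ => (0:ℝ))
      · simp [MeasureTheory.integrableOn_const]
      · intro y hy
        have hy1 : ¬ y ≤ R / 2 := by simp only [Set.mem_Ioi] at hy; push_neg; linarith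
        have hy2 : ¬ y < R := by simp only [Set.mem_Ioi] at hy; push_neg; linarith
        simp only [hg, hy1, hy2, if_false, abs_zero]
        rw [Real.zero_rpow hp0.ne']; ring
      · exact measurableSet_Ioi
  have hIoc : ∫ y in Set.Ioc 0 R, y * g y = ∫ y in (0:ℝ)..R, y * g y := by
    rw [intervalIntegral.integral_of_le hR.le]
  have hInt1 : IntervalIntegrable (fun y => y * g y) volume 0 (R/2) := by
    rw [intervalIntegrable_iff, Set.uIoc_of_le hR2.le]
    exact hIntOn.mono_set (Set.Ioc_subset_Ioc le_rfl (by linarith))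
  have hInt2 : IntervalIntegrable (fun y => y * g y) volume (R/2) R := by
    rw [intervalIntegrable_iff, Set.uIoc_of_le (by linarith)]
    exact hIntOn.mono_set (Set.Ioc_subset_Ioc hR2.le le_rfl)
  have hadj : ∫ y in (0:ℝ)..R, y * g y =
      (∫ y in (0:ℝ)..(R/2), y * g y) + ∫ y in (R/2)..R, y * g y :=
    (intervalIntegral.integral_add_adjacent_intervals hInt1 hInt2).symm
  -- piece A
  have hA : ∫ y in (0:ℝ)..(R/2), y * g y = R^2/8 := by
    rw [intervalIntegral.integral_congr (g := fun y => y) ?_]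
    · rw [integral_id]; ring
    · intro y hy
      rw [Set.uIcc_of_le hR2.le] at hy
      have : y ≤ R / 2 := hy.2
      simp [hg, this, Real.one_rpow]
  -- piece B
  have hcongrB : Set.EqOn (fun y => y * g y)
      (fun y => (2/R)^p * ((R - y)^p * y)) (Set.uIcc (R/2) R) := by
    intro y hy
    rw [Set.uIcc_of_le (by linarith)] at hy
    obtain ⟨hy1, hy2⟩ := hy
    have hbase : g y = ((2/R) * (R - y))^p := by
      by_cases hc1 : y ≤ R / 2
      · have hyeq : y = R / 2 := le_antisymm hc1 hy1
        simp only [hg, hc1, if_true, abs_one, Real.one_rpow]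
        rw [hyeq, show (2/R) * (R - R/2) = 1 by field_simp; ring, Real.one_rpow]
      · by_cases hc2 : y < R
        · simp only [hg, hc1, hc2, if_false, if_true]
          have hnn : 0 ≤ 2 - 2 / R * y := by
            have : 2 / R * y < 2 := by rw [div_mul_eq_mul_div, div_lt_iff₀ hR]; linarith
            linarith
          rw [abs_of_nonneg hnn]
          congr 1
          field_simp
        · have hyeq : y = R := le_antisymm hy2 (not_lt.mp hc2)
          simp only [hg, hc1, hc2, if_false, abs_zero]
          rw [hyeq, sub_self, mul_zero, Real.zero_rpow hp0.ne']
    simp only [hbase]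
    rw [Real.mul_rpow (by positivity) (by linarith)]
    ring
  have hB : ∫ y in (R/2)..R, y * g y =
      (2/R)^p * (R * ((R/2)^(p+1)/(p+1)) - (R/2)^(p+2)/(p+2)) := by
    rw [intervalIntegral.integral_congr hcongrB, intervalIntegral.integral_const_mul]
    congr 1
    have hsub : ∫ y in (R/2)..R, (R - y)^p * y = ∫ u in (0:ℝ)..(R/2), u^p * (R - u) := by
      have h1 := intervalIntegral.integral_comp_sub_left
        (a := R/2) (b := R) (fun u => u ^ p * (R - u)) R
      rw [sub_self, show R - R/2 = R/2 by ring] at h1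
      rw [← h1]
      apply intervalIntegral.integral_congr
      intro y _
      simp only [sub_sub_cancel]
    rw [hsub]
    have hexp : Set.EqOn (fun u : ℝ => u^p * (R - u))
        (fun u => R * u^p - u^(p+1)) (Set.uIcc 0 (R/2)) := by
      intro u hu
      rw [Set.uIcc_of_le hR2.le] at hu
      rcases eq_or_lt_of_le hu.1 with h | h
      · simp only [← h, Real.zero_rpow hp0.ne',
          Real.zero_rpow (by positivity : p + 1 ≠ 0)]
        ring
      · simp only [Real.rpow_add_one h.ne']
        ring
    rw [intervalIntegral.integral_congr hexp]
    have hi1 : IntervalIntegrable (fun u : ℝ => R * u^p) volume 0 (R/2) := by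
      apply Continuous.intervalIntegrable
      exact continuous_const.mul (continuous_id.rpow_const (fun x => Or.inr hp0.le))
    have hi2 : IntervalIntegrable (fun u : ℝ => u^(p+1)) volume 0 (R/2) := by
      apply Continuous.intervalIntegrable
      exact continuous_id.rpow_const (fun x => Or.inr (by positivity))
    rw [intervalIntegral.integral_sub hi1 hi2, intervalIntegral.integral_const_mul,
      integral_rpow (Or.inl (by linarith)), integral_rpow (Or.inl (by linarith))]
    rw [Real.zero_rpow (by positivity : p + 1 ≠ 0),
      Real.zero_rpow (by positivity : p + 1 + 1 ≠ 0)]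
    rw [show p + 1 + 1 = p + 2 by ring]
    ring
  -- cancellations
  have hone : (2/R)^p * ((R/2):ℝ)^p = 1 := by
    rw [← Real.mul_rpow (by positivity) (by positivity),
      show (2/R) * (R/2) = 1 by field_simp, Real.one_rpow]
  have hc1 : (2/R)^p * ((R/2):ℝ)^(p+1) = R/2 := by
    rw [Real.rpow_add_one hR2.ne', ← mul_assoc, hone, one_mul]
  have hc2 : (2/R)^p * ((R/2):ℝ)^(p+2) = R^2/4 := by
    rw [show p + 2 = p + 1 + 1 by ring, Real.rpow_add_one hR2.ne',
      Real.rpow_add_one hR2.ne', ← mul_assoc, ← mul_assoc, hone, one_mul]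
    ring
  have hfinal : ∫ y in Set.Ioi (0:ℝ), y * g y =
      R^2/8 + (R/2) * R/(p+1) - (R^2/4)/(p+2) := by
    rw [hsplit, hIoc, hadj, hA, hB]
    linear_combination (R/(p+1)) * hc1 - (1/(p+2)) * hc2
  have hgoal : ∫ y in Set.Ioi (0:ℝ), y * g y =
      R^2/8 + (R/2) * R/(p+1) - (R^2/4)/(p+2) := hfinal
  rw [show (∫ y in Set.Ioi (0:ℝ), y * g y) =
    R^2/8 + (R/2) * R/(p+1) - (R^2/4)/(p+2) from hfinal]
  rw [hp]
  have h2s : (2:ℝ) + s ≠ 0 := by linarith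
  have h1s : (1:ℝ) + s ≠ 0 := by linarith
  have hd1 : 2 / s + 1 ≠ 0 := by positivity
  have hd2 : 2 / s + 2 ≠ 0 := by positivity
  field_simp
  ring
end
end

section
/- Suppose s ∈ (0,1), f satisfies (f1)–(f4) with τ ∈ (0,s) the constant of (f3), let α ∈ (0,1] and let c ∈ (0, s/4). Let (u_n) ⊂ W^{s,2/s}(ℝ²) be a Cerami sequence of I_α at level c, i.e. I_α(u_n) → c and (1+‖u_n‖)·sup{ |I'_α(u_n)v| : v ∈ W^{s,2/s}(ℝ²), ‖v‖ ≤ 1 } → 0 as n → ∞. Then for all sufficiently large n one has ‖u_n‖^{2/s} < s/τ; moreover there exists C > 0 such that for all n: |∫_{ℝ²}∫_{ℝ²} G_α(x−y) F(u_n(x)) F(u_n(y)) dx dy| ≤ C and |∫_{ℝ²} (∫_{ℝ²} G_α(x−y) F(u_n(y)) dy) f(u_n(x)) u_n(x) dx| ≤ C. -/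
open MeasureTheory Real Filter

noncomputable section

/-- The constant `μ(s,τ)`. -/
def muST (s τ : ℝ) : ℝ :=
  min (s / 2)
    ((1 / 2) * ((2 / s - (genFloor (2 / s) : ℝ)) / ((2 / s) * genFact (2 / s))) *
      (τ / s) ^ (s / 2))

/-- Assumption (f3), with parameter `τ`. -/
def Cond_f3 (s τ : ℝ) (f : ℝ → ℝ) : Prop :=
  ∀ t : ℝ, 0 < t →
    1 - s + τ ≤ Fprim f t * deriv f t / (f t) ^ 2 ∧
      Fprim f t * deriv f t / (f t) ^ 2 < 1 + muST s τ

/-- Assumption (f4). -/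
def Cond_f4 (f : ℝ → ℝ) : Prop :=
  Tendsto (fun t => Fprim f t * deriv f t / (f t) ^ 2) atTop (nhds 1)

/-- The threshold `T(s)`. -/
def Tconst (s : ℝ) : ℝ :=
  (π / 18 * ((4 * s ^ 2 + 5 * s + 2) / ((2 + s) * (1 + s))) +
      2 * π ^ 2 / 9 * ((77 * s + 90) / (2 - s))) ^ (-(s / 2))

/-- The constant `β₀`. -/
def beta0 (s : ℝ) : ℝ :=
  (2 ^ 4 * 3 ^ 4 / (π * Real.log 3)) * Tconst s ^ (-(2 / s + 1))

/-- Assumption (f5). -/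
def Cond_f5 (s : ℝ) (f : ℝ → ℝ) : Prop :=
  ∃ β : ℝ, beta0 s < β ∧ ∀ t : ℝ, Tconst s < t → β * t ^ (2 / s) ≤ f t * Fprim f t

/-- Radially symmetric function on `ℝ²`. -/
def Radial (u : E2 → ℝ) : Prop := ∀ x y : E2, ‖x‖ = ‖y‖ → u x = u y

/-- The `W^{s,2/s}` norm `‖u‖ = (‖u‖_{2/s}^{2/s} + [u]_{s,2/s}^{2/s})^{s/2}`. -/
def Wnorm (s : ℝ) (u : E2 → ℝ) : ℝ :=
  ((∫ x : E2, |u x| ^ (2 / s)) +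
      ∫ x : E2, ∫ y : E2, |u x - u y| ^ (2 / s) / ‖x - y‖ ^ 4) ^ (s / 2)

/-- The approximating kernel `G_α(x) = (|x|^{-α} - 1)/α`. -/
def Galpha (α : ℝ) (x : E2) : ℝ := (‖x‖ ^ (-α) - 1) / α

/-- The approximating energy functional `I_α`. -/
def Ifun (s α : ℝ) (f : ℝ → ℝ) (u : E2 → ℝ) : ℝ :=
  (s / 2) * Wnorm s u ^ (2 / s) -
    (1 / (4 * π)) * ∫ x : E2, ∫ y : E2, Galpha α (x - y) * Fprim f (u x) * Fprim f (u y)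

/-- The derivative `I'_α(u)v`. -/
def Ider (s α : ℝ) (f : ℝ → ℝ) (u v : E2 → ℝ) : ℝ :=
  (∫ x : E2, ∫ y : E2,
      |u x - u y| ^ (2 / s - 2) * (u x - u y) * (v x - v y) / ‖x - y‖ ^ 4)
    + (∫ x : E2, |u x| ^ (2 / s - 2) * u x * v x)
    - (1 / (2 * π)) *
        ∫ x : E2, (∫ y : E2, Galpha α (x - y) * Fprim f (u y)) * f (u x) * v x

namespace Aux19

lemma div_mono_nonneg {a b c : ℝ} (h : a ≤ b) (hc : 0 ≤ c) : a / c ≤ b / c := by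
  rw [div_eq_mul_inv, div_eq_mul_inv]
  exact mul_le_mul_of_nonneg_right h (inv_nonneg.2 hc)

lemma Fprim_of_nonpos {f : ℝ → ℝ} (hf0 : ∀ t ≤ (0:ℝ), f t = 0) {t : ℝ} (ht : t ≤ 0) :
    Fprim f t = 0 := by
  unfold Fprim
  rw [intervalIntegral.integral_symm]
  have h : Set.EqOn f (fun _ => (0:ℝ)) (Set.uIcc t 0) := by
    intro r hr
    rw [Set.uIcc_of_le ht] at hr
    exact hf0 r hr.2
  rw [intervalIntegral.integral_congr h]
  simp

lemma hasDerivAt_Fprim {f : ℝ → ℝ} (hfc : Continuous f) (t : ℝ) :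
    HasDerivAt (Fprim f) (f t) t :=
  intervalIntegral.integral_hasDerivAt_right (hfc.intervalIntegrable 0 t)
    (hfc.stronglyMeasurableAtFilter volume _) hfc.continuousAt

lemma Fprim_continuous {f : ℝ → ℝ} (hfc : Continuous f) : Continuous (Fprim f) :=
  continuous_iff_continuousAt.2 fun t => (hasDerivAt_Fprim hfc t).continuousAt

lemma Fprim_nonneg {f : ℝ → ℝ} (hfc : Continuous f) (hf0 : ∀ t ≤ (0:ℝ), f t = 0)
    (hfnn : ∀ t, 0 ≤ f t) (t : ℝ) : 0 ≤ Fprim f t := by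
  rcases le_total t 0 with ht | ht
  · rw [Fprim_of_nonpos hf0 ht]
  · exact intervalIntegral.integral_nonneg ht fun x _ => hfnn x

lemma Fprim_pos {f : ℝ → ℝ} (hfc : Continuous f) (hfpos : ∀ t, 0 < t → 0 < f t)
    {t : ℝ} (ht : 0 < t) : 0 < Fprim f t :=
  intervalIntegral.intervalIntegral_pos_of_pos_on (hfc.intervalIntegrable 0 t)
    (fun x hx => hfpos x hx.1) ht

lemma muST_pos {s τ : ℝ} (hs0 : 0 < s) (hs1 : s < 1) (hτ0 : 0 < τ) : 0 < muST s τ := by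
  have hq : (2:ℝ) < 2 / s := by
    rw [lt_div_iff₀ hs0]; linarith
  have hq0 : (0:ℝ) < 2 / s := by linarith
  have hceil : (2:ℤ) < ⌈(2/s : ℝ)⌉ := by
    rw [Int.lt_ceil]; exact_mod_cast hq
  have hgf : ((genFloor (2/s) : ℕ) : ℝ) = ((⌈(2/s:ℝ)⌉ : ℤ) : ℝ) - 1 := by
    unfold genFloor
    have h1 : (0:ℤ) ≤ ⌈(2/s:ℝ)⌉ - 1 := by omega
    have h2 : (((⌈(2/s:ℝ)⌉ - 1).toNat : ℤ) : ℝ) = ((⌈(2/s:ℝ)⌉ : ℤ) : ℝ) - 1 := by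
      rw [Int.toNat_of_nonneg h1]; push_cast; ring
    exact_mod_cast h2
  have hnum : 0 < 2/s - (genFloor (2/s) : ℝ) := by
    rw [hgf]
    have := Int.ceil_lt_add_one (2/s : ℝ)
    linarith
  have hfact : 0 < genFact (2/s) := by
    apply Finset.prod_pos
    intro i hi
    have hi' : (i : ℝ) ≤ (genFloor (2/s) : ℝ) := by
      exact_mod_cast Nat.lt_succ_iff.1 (Finset.mem_range.1 hi)
    linarith
  unfold muST
  apply lt_min (by linarith)
  have h1 : (0:ℝ) < (τ / s) ^ (s / 2) := Real.rpow_pos_of_pos (div_pos hτ0 hs0) _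
  have h2 : 0 < (2/s - (genFloor (2/s) : ℝ)) / ((2/s) * genFact (2/s)) :=
    div_pos hnum (mul_pos hq0 hfact)
  have : (0:ℝ) < 1/2 := by norm_num
  exact mul_pos (mul_pos this h2) h1

lemma mono_of_deriv {φ φd : ℝ → ℝ} {a b : ℝ} (ha : 0 < a)
    (hd : ∀ x, 0 < x → x ≤ b → HasDerivAt φ (φd x) x)
    (hnn : ∀ x, 0 < x → x ≤ b → 0 ≤ φd x) (hab : a ≤ b) : φ a ≤ φ b := by
  have hmono : MonotoneOn φ (Set.Icc a b) := by
    apply monotoneOn_of_deriv_nonneg (convex_Icc a b)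
    · intro x hx
      exact ((hd x (ha.trans_le hx.1) hx.2).continuousAt).continuousWithinAt
    · intro x hx
      rw [interior_Icc] at hx
      exact ((hd x (ha.trans hx.1) hx.2.le).differentiableAt).differentiableWithinAt
    · intro x hx
      rw [interior_Icc] at hx
      have hx0 : 0 < x := ha.trans hx.1
      rw [(hd x hx0 hx.2.le).deriv]
      exact hnn x hx0 hx.2.le
  exact hmono (Set.left_mem_Icc.2 hab) (Set.right_mem_Icc.2 hab) hab

end Aux19

namespace Aux19

variable {s τ : ℝ} {f : ℝ → ℝ}

lemma g_deriv (hfC : ContDiff ℝ 1 f) (hfpos : ∀ t, 0 < t → 0 < f t) {t : ℝ} (ht : 0 < t) :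
    HasDerivAt (fun t => Fprim f t / f t)
      ((f t * f t - Fprim f t * deriv f t) / f t ^ 2) t := by
  have h1 := hasDerivAt_Fprim hfC.continuous t
  have h2 : HasDerivAt f (deriv f t) t := (hfC.differentiable one_ne_zero t).hasDerivAt
  exact h1.div h2 (hfpos t ht).ne'

lemma g_deriv_val {t : ℝ} (hft : f t ≠ 0) :
    (f t * f t - Fprim f t * deriv f t) / f t ^ 2 = 1 - Fprim f t * deriv f t / f t ^ 2 := by
  field_simp

lemma gK (hs0 : 0 < s) (hτ0 : 0 < τ) (hτs : τ < s)
    (hfC : ContDiff ℝ 1 f) (hf0 : ∀ t ≤ (0:ℝ), f t = 0) (hfnn : ∀ t, 0 ≤ f t)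
    (hfpos : ∀ t, 0 < t → 0 < f t) (hf3 : Cond_f3 s τ f) :
    ∀ t, 0 < t → Fprim f t / f t ≤ (s - τ) * t := by
  intro t0 ht0
  by_contra hcon
  push_neg at hcon
  set δ : ℝ := Fprim f t0 / f t0 - (s - τ) * t0 with hδdef
  have hδ : 0 < δ := by rw [hδdef]; linarith
  -- Step 1 : δ * f x ≤ Fprim f x on (0, t0]
  have step1 : ∀ x, 0 < x → x ≤ t0 → δ * f x ≤ Fprim f x := by
    intro x hx hxt
    have hφ := mono_of_deriv (φ := fun y => (s - τ) * y - Fprim f y / f y)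
      (φd := fun y => (s - τ) * 1 - (f y * f y - Fprim f y * deriv f y) / f y ^ 2)
      hx
      (fun y hy _ => ((hasDerivAt_id y).const_mul (s - τ)).sub (g_deriv hfC hfpos hy))
      (fun y hy _ => by
        have h3 := (hf3 y hy).1
        show 0 ≤ (s - τ) * 1 - (f y * f y - Fprim f y * deriv f y) / f y ^ 2
        rw [g_deriv_val (hfpos y hy).ne']
        linarith)
      hxt
    have hgx : δ ≤ Fprim f x / f x := by
      rw [hδdef]
      have hx2 : 0 ≤ (s - τ) * x := mul_nonneg (by linarith) hx.le
      linarith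
    exact (le_div_iff₀ (hfpos x hx)).1 hgx
  -- Step 2 : Fprim f x ≥ δ1 on (0, t0]
  have hFt0 : 0 < Fprim f t0 := Fprim_pos hfC.continuous hfpos ht0
  set δ1 : ℝ := Fprim f t0 * Real.exp (-t0 / δ) with hδ1def
  have hδ1 : 0 < δ1 := mul_pos hFt0 (Real.exp_pos _)
  have step3 : ∀ x, 0 < x → x ≤ t0 → δ1 ≤ Fprim f x := by
    intro x hx hxt
    have hψ := mono_of_deriv (φ := fun y => -(Fprim f y * Real.exp (-y / δ)))
      (φd := fun y => Real.exp (-y / δ) * (Fprim f y / δ - f y))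
      hx
      (fun y hy hyt => by
        have hE : HasDerivAt (fun y : ℝ => Real.exp (-y / δ))
            (Real.exp (-y / δ) * ((-1) / δ)) y := by
          have hinner : HasDerivAt (fun y : ℝ => -y / δ) ((-1) / δ) y := by
            simpa using ((hasDerivAt_id y).neg.div_const δ)
          exact (Real.hasDerivAt_exp (-y / δ)).comp y hinner
        have h := ((hasDerivAt_Fprim hfC.continuous y).mul hE).neg
        refine HasDerivAt.congr_deriv h ?_
        ring)
      (fun y hy hyt => by
        show 0 ≤ Real.exp (-y / δ) * (Fprim f y / δ - f y)
        have h1 : f y ≤ Fprim f y / δ := by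
          rw [le_div_iff₀ hδ]
          have := step1 y hy hyt
          linarith
        have hE := (Real.exp_pos (-y / δ)).le
        have : 0 ≤ Fprim f y / δ - f y := by linarith
        positivity)
      hxt
    have hexc : Real.exp (-x / δ) ≤ 1 := by
      rw [Real.exp_le_one_iff]
      rw [neg_div]
      have : 0 ≤ x / δ := le_of_lt (div_pos hx hδ)
      linarith
    have hE0 : 0 < Real.exp (-x / δ) := Real.exp_pos _
    have hFx0 : 0 ≤ Fprim f x := Fprim_nonneg hfC.continuous hf0 hfnn x
    have hmul : Fprim f x * Real.exp (-x / δ) ≤ Fprim f x * 1 :=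
      mul_le_mul_of_nonneg_left hexc hFx0
    rw [hδ1def]
    nlinarith
  -- Step 3 : contradiction with continuity of Fprim at 0
  have hcont := (Fprim_continuous (f := f) hfC.continuous).continuousAt (x := 0)
  rw [Metric.continuousAt_iff] at hcont
  obtain ⟨r, hr0, hball⟩ := hcont δ1 hδ1
  set x : ℝ := min (r / 2) t0 with hxdef
  have hx0 : 0 < x := lt_min (by linarith) ht0
  have hxr : dist x 0 < r := by
    rw [Real.dist_eq, sub_zero, abs_of_pos hx0]
    calc x ≤ r / 2 := min_le_left _ _
      _ < r := by linarith
  have hlt := hball hxr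
  have hF0 : Fprim f 0 = 0 := intervalIntegral.integral_same
  rw [Real.dist_eq, hF0, sub_zero] at hlt
  have h3 := step3 x hx0 (min_le_right _ _)
  have h4 := le_abs_self (Fprim f x)
  linarith

lemma gnn (hfC : ContDiff ℝ 1 f) (hf0 : ∀ t ≤ (0:ℝ), f t = 0) (hfnn : ∀ t, 0 ≤ f t) :
    ∀ t : ℝ, 0 ≤ Fprim f t / f t := fun t =>
  div_nonneg (Fprim_nonneg hfC.continuous hf0 hfnn t) (hfnn t)

lemma g_zero (hf0 : ∀ t ≤ (0:ℝ), f t = 0) : ∀ t ≤ (0:ℝ), Fprim f t / f t = 0 := by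
  intro t ht
  rw [Fprim_of_nonpos hf0 ht, zero_div]

lemma gU (hs0 : 0 < s) (hτ0 : 0 < τ) (hτs : τ < s)
    (hfC : ContDiff ℝ 1 f) (hf0 : ∀ t ≤ (0:ℝ), f t = 0) (hfnn : ∀ t, 0 ≤ f t)
    (hfpos : ∀ t, 0 < t → 0 < f t) (hf3 : Cond_f3 s τ f) :
    ∀ a b : ℝ, a ≤ b → Fprim f b / f b - Fprim f a / f a ≤ (s - τ) * (b - a) := by
  intro a b hab
  have hst : 0 ≤ s - τ := by linarith
  rcases le_or_gt b 0 with hb | hb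
  · rw [g_zero hf0 b hb, g_zero hf0 a (hab.trans hb)]
    have : 0 ≤ (s - τ) * (b - a) := mul_nonneg hst (by linarith)
    linarith
  rcases le_or_gt a 0 with ha | ha
  · rw [g_zero hf0 a ha]
    have h1 := gK hs0 hτ0 hτs hfC hf0 hfnn hfpos hf3 b hb
    have h2 : (s - τ) * b ≤ (s - τ) * (b - a) := mul_le_mul_of_nonneg_left (by linarith) hst
    linarith
  · have hφ := mono_of_deriv (φ := fun y => (s - τ) * y - Fprim f y / f y)
      (φd := fun y => (s - τ) * 1 - (f y * f y - Fprim f y * deriv f y) / f y ^ 2)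
      ha
      (fun y hy _ => ((hasDerivAt_id y).const_mul (s - τ)).sub (g_deriv hfC hfpos hy))
      (fun y hy _ => by
        have h3 := (hf3 y hy).1
        show 0 ≤ (s - τ) * 1 - (f y * f y - Fprim f y * deriv f y) / f y ^ 2
        rw [g_deriv_val (hfpos y hy).ne']
        linarith)
      hab
    linarith

lemma gL (hs0 : 0 < s) (hs1 : s < 1) (hτ0 : 0 < τ) (hτs : τ < s)
    (hfC : ContDiff ℝ 1 f) (hf0 : ∀ t ≤ (0:ℝ), f t = 0) (hfnn : ∀ t, 0 ≤ f t)
    (hfpos : ∀ t, 0 < t → 0 < f t) (hf3 : Cond_f3 s τ f) :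
    ∀ a b : ℝ, a ≤ b → -(muST s τ) * (b - a) ≤ Fprim f b / f b - Fprim f a / f a := by
  intro a b hab
  have hμ : 0 < muST s τ := muST_pos hs0 hs1 hτ0
  rcases le_or_gt b 0 with hb | hb
  · rw [g_zero hf0 b hb, g_zero hf0 a (hab.trans hb)]
    have : 0 ≤ muST s τ * (b - a) := mul_nonneg hμ.le (by linarith)
    linarith
  rcases le_or_gt a 0 with ha | ha
  · rw [g_zero hf0 a ha]
    have h1 := gnn hfC hf0 hfnn b
    have : 0 ≤ muST s τ * (b - a) := mul_nonneg hμ.le (by linarith)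
    linarith
  · have hφ := mono_of_deriv (φ := fun y => Fprim f y / f y + muST s τ * y)
      (φd := fun y => (f y * f y - Fprim f y * deriv f y) / f y ^ 2 + muST s τ * 1)
      ha
      (fun y hy _ => (g_deriv hfC hfpos hy).add ((hasDerivAt_id y).const_mul (muST s τ)))
      (fun y hy _ => by
        have h3 := (hf3 y hy).2
        show 0 ≤ (f y * f y - Fprim f y * deriv f y) / f y ^ 2 + muST s τ * 1
        rw [g_deriv_val (hfpos y hy).ne']
        linarith)
      hab
    linarith

lemma gLip (hs0 : 0 < s) (hs1 : s < 1) (hτ0 : 0 < τ) (hτs : τ < s)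
    (hfC : ContDiff ℝ 1 f) (hf0 : ∀ t ≤ (0:ℝ), f t = 0) (hfnn : ∀ t, 0 ≤ f t)
    (hfpos : ∀ t, 0 < t → 0 < f t) (hf3 : Cond_f3 s τ f) :
    ∀ a b : ℝ, |Fprim f b / f b - Fprim f a / f a| ≤
      max (s - τ) (muST s τ) * |b - a| := by
  intro a b
  have hM1 : s - τ ≤ max (s - τ) (muST s τ) := le_max_left _ _
  have hM2 : muST s τ ≤ max (s - τ) (muST s τ) := le_max_right _ _
  rcases le_total a b with h | h
  · have h1 := gU hs0 hτ0 hτs hfC hf0 hfnn hfpos hf3 a b h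
    have h2 := gL hs0 hs1 hτ0 hτs hfC hf0 hfnn hfpos hf3 a b h
    rw [abs_of_nonneg (sub_nonneg.2 h)]
    apply abs_le.2
    constructor
    · have hh : muST s τ * (b - a) ≤ max (s - τ) (muST s τ) * (b - a) :=
        mul_le_mul_of_nonneg_right hM2 (by linarith)
      linarith
    · have hh : (s - τ) * (b - a) ≤ max (s - τ) (muST s τ) * (b - a) :=
        mul_le_mul_of_nonneg_right hM1 (by linarith)
      linarith
  · have h1 := gU hs0 hτ0 hτs hfC hf0 hfnn hfpos hf3 b a h
    have h2 := gL hs0 hs1 hτ0 hτs hfC hf0 hfnn hfpos hf3 b a h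
    have habs : |b - a| = a - b := by
      rw [abs_sub_comm, abs_of_nonneg (sub_nonneg.2 h)]
    rw [habs]
    apply abs_le.2
    constructor
    · have hh : (s - τ) * (a - b) ≤ max (s - τ) (muST s τ) * (a - b) :=
        mul_le_mul_of_nonneg_right hM1 (by linarith)
      linarith
    · have hh : muST s τ * (a - b) ≤ max (s - τ) (muST s τ) * (a - b) :=
        mul_le_mul_of_nonneg_right hM2 (by linarith)
      linarith

lemma g_id (hf0 : ∀ t ≤ (0:ℝ), f t = 0) (hfpos : ∀ t, 0 < t → 0 < f t) :
    ∀ t : ℝ, f t * (Fprim f t / f t) = Fprim f t := by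
  intro t
  rcases le_or_gt t 0 with h | h
  · rw [hf0 t h, Fprim_of_nonpos hf0 h]
    simp
  · rw [mul_comm]
    exact div_mul_cancel₀ _ (hfpos t h).ne'

end Aux19

namespace Aux19

/-- statement-level abbreviations -/
def Aint (α : ℝ) (f : ℝ → ℝ) (v : E2 → ℝ) : ℝ :=
  ∫ x : E2, ∫ y : E2, Galpha α (x - y) * Fprim f (v x) * Fprim f (v y)

def Bint (α : ℝ) (f : ℝ → ℝ) (v : E2 → ℝ) : ℝ :=
  ∫ x : E2, (∫ y : E2, Galpha α (x - y) * Fprim f (v y)) * f (v x) * v x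

lemma habs_abs {q : ℝ} (hq : 2 < q) (a : ℝ) : |a| ^ (q - 2) * |a| * |a| = |a| ^ q := by
  rcases eq_or_ne a 0 with rfl | ha
  · rw [abs_zero, Real.zero_rpow (by linarith : q - 2 ≠ 0), Real.zero_rpow (by linarith : q ≠ 0)]
    ring
  · have h0 : 0 < |a| := abs_pos.2 ha
    calc |a| ^ (q - 2) * |a| * |a| = |a| ^ (q - 2) * |a| ^ (1:ℝ) * |a| ^ (1:ℝ) := by
          rw [Real.rpow_one]
      _ = |a| ^ (q - 2 + 1 + 1) := by rw [Real.rpow_add h0, Real.rpow_add h0]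
      _ = |a| ^ q := by ring_nf
lemma habs_mul {q : ℝ} (hq : 2 < q) (a : ℝ) : |a| ^ (q - 2) * a * a = |a| ^ q := by
  rw [mul_assoc, ← abs_mul_abs_self a, ← mul_assoc]
  exact habs_abs hq a

lemma Wsum_nonneg (s : ℝ) (v : E2 → ℝ) :
    0 ≤ (∫ x : E2, |v x| ^ (2 / s)) +
        ∫ x : E2, ∫ y : E2, |v x - v y| ^ (2 / s) / ‖x - y‖ ^ 4 :=
  add_nonneg (integral_nonneg fun x => Real.rpow_nonneg (abs_nonneg _) _)
    (integral_nonneg fun x => integral_nonneg fun y =>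
      div_nonneg (Real.rpow_nonneg (abs_nonneg _) _) (by positivity))

lemma Wnorm_nonneg (s : ℝ) (v : E2 → ℝ) : 0 ≤ Wnorm s v :=
  Real.rpow_nonneg (Wsum_nonneg s v) _

lemma Wnorm_rpow {s : ℝ} (hs0 : 0 < s) (v : E2 → ℝ) :
    Wnorm s v ^ (2 / s) = (∫ x : E2, |v x| ^ (2 / s)) +
        ∫ x : E2, ∫ y : E2, |v x - v y| ^ (2 / s) / ‖x - y‖ ^ 4 := by
  rw [Wnorm, ← Real.rpow_mul (Wsum_nonneg s v),
    show s / 2 * (2 / s) = 1 by field_simp, Real.rpow_one]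

lemma Ider_smul (s α : ℝ) (f : ℝ → ℝ) (u v : E2 → ℝ) (c : ℝ) :
    Ider s α f u (fun x => c * v x) = c * Ider s α f u v := by
  simp only [Ider]
  have h1 : ∀ x : E2, (∫ y : E2,
      |u x - u y| ^ (2 / s - 2) * (u x - u y) * (c * v x - c * v y) / ‖x - y‖ ^ 4)
      = c * ∫ y : E2, |u x - u y| ^ (2 / s - 2) * (u x - u y) * (v x - v y) / ‖x - y‖ ^ 4 := by
    intro x
    rw [← integral_const_mul]
    congr 1
    funext y
    ring
  have h2 : ∀ x : E2, |u x| ^ (2 / s - 2) * u x * (c * v x)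
      = c * (|u x| ^ (2 / s - 2) * u x * v x) := fun x => by ring
  have h3 : ∀ x : E2, (∫ y : E2, Galpha α (x - y) * Fprim f (u y)) * f (u x) * (c * v x)
      = c * ((∫ y : E2, Galpha α (x - y) * Fprim f (u y)) * f (u x) * v x) := fun x => by ring
  simp only [h1, h2, h3]
  rw [integral_const_mul, integral_const_mul, integral_const_mul]
  ring

lemma Wnorm_smul {s : ℝ} (hs0 : 0 < s) (v : E2 → ℝ) {c : ℝ} (hc : 0 ≤ c) :
    Wnorm s (fun x => c * v x) = c * Wnorm s v := by
  simp only [Wnorm]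
  have habs : ∀ a : ℝ, |c * a| ^ (2 / s) = c ^ (2 / s) * |a| ^ (2 / s) := fun a => by
    rw [abs_mul, Real.mul_rpow (abs_nonneg _) (abs_nonneg _), abs_of_nonneg hc]
  have h1 : ∀ x : E2, |c * v x| ^ (2 / s) = c ^ (2 / s) * |v x| ^ (2 / s) := fun x => habs _
  have h2 : ∀ x y : E2, |c * v x - c * v y| ^ (2 / s) / ‖x - y‖ ^ 4
      = c ^ (2 / s) * (|v x - v y| ^ (2 / s) / ‖x - y‖ ^ 4) := by
    intro x y
    rw [show c * v x - c * v y = c * (v x - v y) by ring, habs, mul_div_assoc]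
  simp only [h1, h2]
  rw [integral_const_mul]
  have h3 : ∀ x : E2, (∫ y : E2, c ^ (2 / s) * (|v x - v y| ^ (2 / s) / ‖x - y‖ ^ 4))
      = c ^ (2 / s) * ∫ y : E2, |v x - v y| ^ (2 / s) / ‖x - y‖ ^ 4 := fun x =>
    integral_const_mul _ _
  simp only [h3]
  rw [integral_const_mul, ← mul_add,
    Real.mul_rpow (by positivity) (Wsum_nonneg s v), ← Real.rpow_mul hc,
    show 2 / s * (s / 2) = 1 by field_simp, Real.rpow_one]

lemma MemW_smul {s : ℝ} {v : E2 → ℝ} (hv : MemW s v) (c : ℝ) :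
    MemW s (fun x => c * v x) := by
  obtain ⟨h1, h2⟩ := hv
  refine ⟨h1.const_mul c, ?_⟩
  refine (h2.const_mul (|c| ^ (2 / s))).congr (ae_of_all _ fun p => ?_)
  show |c| ^ (2 / s) * (|v p.1 - v p.2| ^ (2 / s) / ‖p.1 - p.2‖ ^ 4)
      = |c * v p.1 - c * v p.2| ^ (2 / s) / ‖p.1 - p.2‖ ^ 4
  rw [show c * v p.1 - c * v p.2 = c * (v p.1 - v p.2) by ring, abs_mul,
    Real.mul_rpow (abs_nonneg _) (abs_nonneg _), mul_div_assoc]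

lemma Ider_self {s : ℝ} (hs0 : 0 < s) (hs1 : s < 1) (α : ℝ) (f : ℝ → ℝ) (u : E2 → ℝ) :
    Ider s α f u u = Wnorm s u ^ (2 / s) - (1 / (2 * π)) * Bint α f u := by
  have hq2 : (2:ℝ) < 2 / s := by rw [lt_div_iff₀ hs0]; linarith
  simp only [Ider, Bint]
  rw [Wnorm_rpow hs0]
  have h1 : ∀ x y : E2, |u x - u y| ^ (2 / s - 2) * (u x - u y) * (u x - u y) / ‖x - y‖ ^ 4
      = |u x - u y| ^ (2 / s) / ‖x - y‖ ^ 4 := fun x y => by rw [habs_mul hq2]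
  have h2 : ∀ x : E2, |u x| ^ (2 / s - 2) * u x * u x = |u x| ^ (2 / s) := fun x =>
    habs_mul hq2 _
  simp only [h1, h2]
  ring

end Aux19

namespace Aux19

lemma per_u (s τ α : ℝ) (f : ℝ → ℝ) (hs0 : 0 < s) (hs1 : s < 1) (hτ0 : 0 < τ) (hτs : τ < s)
    (m : ℝ) (hm0 : 0 < m)
    (g : ℝ → ℝ) (hgm : Measurable g) (hg0 : ∀ t ≤ (0:ℝ), g t = 0)
    (hgK : ∀ t, 0 < t → g t ≤ (s - τ) * t)
    (hgU : ∀ a b : ℝ, a ≤ b → g b - g a ≤ (s - τ) * (b - a))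
    (hgLip : ∀ a b : ℝ, |g b - g a| ≤ m * |b - a|)
    (hgid : ∀ t : ℝ, f t * g t = Fprim f t)
    (u : E2 → ℝ) (hu : MemW s u) :
    MemW s (fun x => g (u x)) ∧ Wnorm s (fun x => g (u x)) ≤ m * Wnorm s u ∧
      (1 / (2 * π)) * Aint α f u + Ider s α f u (fun x => g (u x))
        ≤ (s - τ) * Wnorm s u ^ (2 / s) := by
  obtain ⟨hu1, hu2⟩ := hu
  have hq0 : (0:ℝ) < 2 / s := by positivity
  have hq2 : (2:ℝ) < 2 / s := by rw [lt_div_iff₀ hs0]; linarith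
  have hst0 : (0:ℝ) ≤ s - τ := by linarith
  -- measurability
  have hum : AEStronglyMeasurable u (volume : Measure E2) := hu1.aestronglyMeasurable
  have huae : AEMeasurable u (volume : Measure E2) := hum.aemeasurable
  have hwae : AEMeasurable (fun x => g (u x)) (volume : Measure E2) :=
    hgm.comp_aemeasurable huae
  have hwsm : AEStronglyMeasurable (fun x => g (u x)) (volume : Measure E2) :=
    hwae.aestronglyMeasurable
  -- pointwise bounds
  have hwle : ∀ x : E2, |g (u x)| ≤ m * |u x| := fun x => by
    have h := hgLip 0 (u x)
    rw [hg0 0 le_rfl, sub_zero, sub_zero] at h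
    exact h
  -- Memℒp
  have hwLp : MemLp (fun x => g (u x)) (ENNReal.ofReal (2 / s)) volume := by
    refine (hu1.const_mul m).of_le hwsm (ae_of_all _ fun x => ?_)
    rw [Real.norm_eq_abs, Real.norm_eq_abs, abs_mul, abs_of_pos hm0]
    exact hwle x
  -- integrability of |u|^{2/s}
  have hIu : Integrable (fun x : E2 => |u x| ^ (2 / s)) volume := by
    have h := hu1.integrable_norm_rpow (by simp [ENNReal.ofReal_eq_zero]; linarith)
      ENNReal.ofReal_ne_top
    simpa [ENNReal.toReal_ofReal hq0.le, Real.norm_eq_abs] using h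
  have hrm : Measurable (fun t : ℝ => |t| ^ (2 / s)) :=
    (continuous_abs.rpow_const fun _ => Or.inr hq0.le).measurable
  have hrm2 : Measurable (fun t : ℝ => |t| ^ (2 / s - 2)) :=
    (continuous_abs.rpow_const fun _ => Or.inr (by linarith)).measurable
  have hwq_bound : ∀ x : E2, |g (u x)| ^ (2 / s) ≤ m ^ (2 / s) * |u x| ^ (2 / s) := fun x => by
    calc |g (u x)| ^ (2 / s) ≤ (m * |u x|) ^ (2 / s) :=
          Real.rpow_le_rpow (abs_nonneg _) (hwle x) hq0.le
      _ = m ^ (2 / s) * |u x| ^ (2 / s) := Real.mul_rpow hm0.le (abs_nonneg _)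
  have hIw : Integrable (fun x : E2 => |g (u x)| ^ (2 / s)) volume := by
    refine (hIu.const_mul (m ^ (2 / s))).mono'
      ((hrm.comp_aemeasurable hwae).aestronglyMeasurable) (ae_of_all _ fun x => ?_)
    rw [Real.norm_eq_abs, abs_of_nonneg (Real.rpow_nonneg (abs_nonneg _) _)]
    exact hwq_bound x
  have hIwle : (∫ x : E2, |g (u x)| ^ (2 / s)) ≤ m ^ (2 / s) * ∫ x : E2, |u x| ^ (2 / s) := by
    rw [← integral_const_mul]
    exact integral_mono hIw (hIu.const_mul _) hwq_bound
  -- product space measurability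
  have hQf : Measure.QuasiMeasurePreserving (Prod.fst : E2 × E2 → E2) volume volume :=
    Measure.quasiMeasurePreserving_fst
  have hQs : Measure.QuasiMeasurePreserving (Prod.snd : E2 × E2 → E2) volume volume :=
    Measure.quasiMeasurePreserving_snd
  have hU1 : AEMeasurable (fun p : E2 × E2 => u p.1) volume :=
    huae.comp_quasiMeasurePreserving hQf
  have hU2 : AEMeasurable (fun p : E2 × E2 => u p.2) volume :=
    huae.comp_quasiMeasurePreserving hQs
  have hW1 : AEMeasurable (fun p : E2 × E2 => g (u p.1)) volume := hgm.comp_aemeasurable hU1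
  have hW2 : AEMeasurable (fun p : E2 × E2 => g (u p.2)) volume := hgm.comp_aemeasurable hU2
  have hNm : Measurable (fun p : E2 × E2 => ‖p.1 - p.2‖ ^ 4) :=
    ((continuous_fst.sub continuous_snd).norm.pow 4).measurable
  -- iterated = product integral helper
  have hiter : ∀ (F : E2 → E2 → ℝ), Integrable (fun p : E2 × E2 => F p.1 p.2) volume →
      (∫ x : E2, ∫ y : E2, F x y) = ∫ p : E2 × E2, F p.1 p.2 := fun F hF =>
    MeasureTheory.integral_integral hF
  -- Gagliardo piece for w
  have hΦWle : ∀ p : E2 × E2, |g (u p.1) - g (u p.2)| ^ (2 / s) / ‖p.1 - p.2‖ ^ 4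
      ≤ m ^ (2 / s) * (|u p.1 - u p.2| ^ (2 / s) / ‖p.1 - p.2‖ ^ 4) := fun p => by
    have h1 : |g (u p.1) - g (u p.2)| ^ (2 / s) ≤ m ^ (2 / s) * |u p.1 - u p.2| ^ (2 / s) := by
      calc |g (u p.1) - g (u p.2)| ^ (2 / s) ≤ (m * |u p.1 - u p.2|) ^ (2 / s) :=
            Real.rpow_le_rpow (abs_nonneg _) (hgLip _ _) hq0.le
        _ = _ := Real.mul_rpow hm0.le (abs_nonneg _)
    calc |g (u p.1) - g (u p.2)| ^ (2 / s) / ‖p.1 - p.2‖ ^ 4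
        ≤ (m ^ (2 / s) * |u p.1 - u p.2| ^ (2 / s)) / ‖p.1 - p.2‖ ^ 4 :=
          div_mono_nonneg h1 (by positivity)
      _ = _ := by rw [mul_div_assoc]
  have hΦWm : AEMeasurable
      (fun p : E2 × E2 => |g (u p.1) - g (u p.2)| ^ (2 / s) / ‖p.1 - p.2‖ ^ 4) volume :=
    (hrm.comp_aemeasurable (hW1.sub hW2)).div hNm.aemeasurable
  have hΦWint : Integrable
      (fun p : E2 × E2 => |g (u p.1) - g (u p.2)| ^ (2 / s) / ‖p.1 - p.2‖ ^ 4) volume := by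
    refine (hu2.const_mul (m ^ (2 / s))).mono' hΦWm.aestronglyMeasurable
      (ae_of_all _ fun p => ?_)
    rw [Real.norm_eq_abs, abs_of_nonneg (by positivity)]
    exact hΦWle p
  have hMemw : MemW s (fun x => g (u x)) := ⟨hwLp, hΦWint⟩
  -- Wnorm bound
  have hJw_le : (∫ x : E2, ∫ y : E2, |g (u x) - g (u y)| ^ (2 / s) / ‖x - y‖ ^ 4)
      ≤ m ^ (2 / s) * ∫ x : E2, ∫ y : E2, |u x - u y| ^ (2 / s) / ‖x - y‖ ^ 4 := by
    rw [hiter (fun x y => |g (u x) - g (u y)| ^ (2 / s) / ‖x - y‖ ^ 4) hΦWint,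
      hiter (fun x y => |u x - u y| ^ (2 / s) / ‖x - y‖ ^ 4) hu2, ← integral_const_mul]
    exact integral_mono hΦWint (hu2.const_mul _) hΦWle
  have hWw : Wnorm s (fun x => g (u x)) ≤ m * Wnorm s u := by
    simp only [Wnorm]
    have hSw : 0 ≤ (∫ x : E2, |g (u x)| ^ (2 / s)) +
        ∫ x : E2, ∫ y : E2, |g (u x) - g (u y)| ^ (2 / s) / ‖x - y‖ ^ 4 :=
      Wsum_nonneg s _
    have hsum : (∫ x : E2, |g (u x)| ^ (2 / s)) +
        (∫ x : E2, ∫ y : E2, |g (u x) - g (u y)| ^ (2 / s) / ‖x - y‖ ^ 4)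
        ≤ m ^ (2 / s) * ((∫ x : E2, |u x| ^ (2 / s)) +
          ∫ x : E2, ∫ y : E2, |u x - u y| ^ (2 / s) / ‖x - y‖ ^ 4) := by
      rw [mul_add]
      exact add_le_add hIwle hJw_le
    calc ((∫ x : E2, |g (u x)| ^ (2 / s)) +
        ∫ x : E2, ∫ y : E2, |g (u x) - g (u y)| ^ (2 / s) / ‖x - y‖ ^ 4) ^ (s / 2)
        ≤ (m ^ (2 / s) * ((∫ x : E2, |u x| ^ (2 / s)) +
          ∫ x : E2, ∫ y : E2, |u x - u y| ^ (2 / s) / ‖x - y‖ ^ 4)) ^ (s / 2) :=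
          Real.rpow_le_rpow hSw hsum (by positivity)
      _ = m * ((∫ x : E2, |u x| ^ (2 / s)) +
          ∫ x : E2, ∫ y : E2, |u x - u y| ^ (2 / s) / ‖x - y‖ ^ 4) ^ (s / 2) := by
          rw [Real.mul_rpow (by positivity) (Wsum_nonneg s u), ← Real.rpow_mul hm0.le,
            show 2 / s * (s / 2) = 1 by field_simp, Real.rpow_one]
  -- pairing term T1
  have hpair1 : ∀ x y : E2, |u x - u y| ^ (2 / s - 2) * (u x - u y) * (g (u x) - g (u y))
      ≤ (s - τ) * |u x - u y| ^ (2 / s) := by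
    intro x y
    have hd : (u x - u y) * (g (u x) - g (u y)) ≤ (s - τ) * ((u x - u y) * (u x - u y)) := by
      rcases le_total (u y) (u x) with h | h
      · have h1 := hgU (u y) (u x) h
        nlinarith [sub_nonneg.2 h]
      · have h1 := hgU (u x) (u y) h
        nlinarith [sub_nonneg.2 h]
    calc |u x - u y| ^ (2 / s - 2) * (u x - u y) * (g (u x) - g (u y))
        = |u x - u y| ^ (2 / s - 2) * ((u x - u y) * (g (u x) - g (u y))) := by ring
      _ ≤ |u x - u y| ^ (2 / s - 2) * ((s - τ) * ((u x - u y) * (u x - u y))) :=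
          mul_le_mul_of_nonneg_left hd (Real.rpow_nonneg (abs_nonneg _) _)
      _ = (s - τ) * (|u x - u y| ^ (2 / s - 2) * (u x - u y) * (u x - u y)) := by ring
      _ = (s - τ) * |u x - u y| ^ (2 / s) := by rw [habs_mul hq2]
  have hpair2 : ∀ x y : E2, |(|u x - u y| ^ (2 / s - 2) * (u x - u y) * (g (u x) - g (u y)))|
      ≤ m * |u x - u y| ^ (2 / s) := by
    intro x y
    rw [abs_mul, abs_mul, abs_of_nonneg (Real.rpow_nonneg (abs_nonneg _) (2 / s - 2))]
    have h2 := hgLip (u y) (u x)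
    calc |u x - u y| ^ (2 / s - 2) * |u x - u y| * |g (u x) - g (u y)|
        ≤ |u x - u y| ^ (2 / s - 2) * |u x - u y| * (m * |u x - u y|) :=
          mul_le_mul_of_nonneg_left h2 (by positivity)
      _ = m * (|u x - u y| ^ (2 / s - 2) * |u x - u y| * |u x - u y|) := by ring
      _ = m * |u x - u y| ^ (2 / s) := by rw [habs_abs hq2]
  have hP1 : ∀ p : E2 × E2,
      |u p.1 - u p.2| ^ (2 / s - 2) * (u p.1 - u p.2) * (g (u p.1) - g (u p.2)) / ‖p.1 - p.2‖ ^ 4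
      ≤ (s - τ) * (|u p.1 - u p.2| ^ (2 / s) / ‖p.1 - p.2‖ ^ 4) := fun p => by
    calc _ ≤ ((s - τ) * |u p.1 - u p.2| ^ (2 / s)) / ‖p.1 - p.2‖ ^ 4 :=
          div_mono_nonneg (hpair1 p.1 p.2) (by positivity)
      _ = _ := by rw [mul_div_assoc]
  have hP2 : ∀ p : E2 × E2,
      ‖|u p.1 - u p.2| ^ (2 / s - 2) * (u p.1 - u p.2) * (g (u p.1) - g (u p.2)) / ‖p.1 - p.2‖ ^ 4‖
      ≤ m * (|u p.1 - u p.2| ^ (2 / s) / ‖p.1 - p.2‖ ^ 4) := fun p => by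
    rw [Real.norm_eq_abs, abs_div, abs_of_nonneg (by positivity : (0:ℝ) ≤ ‖p.1 - p.2‖ ^ 4)]
    calc _ ≤ (m * |u p.1 - u p.2| ^ (2 / s)) / ‖p.1 - p.2‖ ^ 4 :=
          div_mono_nonneg (hpair2 p.1 p.2) (by positivity)
      _ = _ := by rw [mul_div_assoc]
  have hPm : AEMeasurable (fun p : E2 × E2 =>
      |u p.1 - u p.2| ^ (2 / s - 2) * (u p.1 - u p.2) * (g (u p.1) - g (u p.2)) / ‖p.1 - p.2‖ ^ 4)
      volume :=
    (((hrm2.comp_aemeasurable (hU1.sub hU2)).mul (hU1.sub hU2)).mul (hW1.sub hW2)).div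
      hNm.aemeasurable
  have hPint : Integrable (fun p : E2 × E2 =>
      |u p.1 - u p.2| ^ (2 / s - 2) * (u p.1 - u p.2) * (g (u p.1) - g (u p.2)) / ‖p.1 - p.2‖ ^ 4)
      volume :=
    (hu2.const_mul m).mono' hPm.aestronglyMeasurable (ae_of_all _ hP2)
  have hT1 : (∫ x : E2, ∫ y : E2,
      |u x - u y| ^ (2 / s - 2) * (u x - u y) * (g (u x) - g (u y)) / ‖x - y‖ ^ 4)
      ≤ (s - τ) * ∫ x : E2, ∫ y : E2, |u x - u y| ^ (2 / s) / ‖x - y‖ ^ 4 := by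
    rw [hiter (fun x y =>
        |u x - u y| ^ (2 / s - 2) * (u x - u y) * (g (u x) - g (u y)) / ‖x - y‖ ^ 4) hPint,
      hiter (fun x y => |u x - u y| ^ (2 / s) / ‖x - y‖ ^ 4) hu2, ← integral_const_mul]
    exact integral_mono hPint (hu2.const_mul _) hP1
  -- L^p term T2
  have hT2b : ∀ x : E2, ‖|u x| ^ (2 / s - 2) * u x * g (u x)‖ ≤ m * |u x| ^ (2 / s) := fun x => by
    rw [Real.norm_eq_abs, abs_mul, abs_mul, abs_of_nonneg (Real.rpow_nonneg (abs_nonneg _) _)]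
    calc |u x| ^ (2 / s - 2) * |u x| * |g (u x)|
        ≤ |u x| ^ (2 / s - 2) * |u x| * (m * |u x|) :=
          mul_le_mul_of_nonneg_left (hwle x) (by positivity)
      _ = m * (|u x| ^ (2 / s - 2) * |u x| * |u x|) := by ring
      _ = m * |u x| ^ (2 / s) := by rw [habs_abs hq2]
  have hT2int : Integrable (fun x : E2 => |u x| ^ (2 / s - 2) * u x * g (u x)) volume :=
    (hIu.const_mul m).mono'
      (((hrm2.comp_aemeasurable huae).mul huae).mul hwae).aestronglyMeasurable
      (ae_of_all _ hT2b)
  have hT2 : (∫ x : E2, |u x| ^ (2 / s - 2) * u x * g (u x))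
      ≤ (s - τ) * ∫ x : E2, |u x| ^ (2 / s) := by
    rw [← integral_const_mul]
    refine integral_mono hT2int (hIu.const_mul _) fun x => ?_
    rcases le_or_gt (u x) 0 with h | h
    · rw [hg0 _ h, mul_zero]
      positivity
    · have hw := hgK (u x) h
      calc |u x| ^ (2 / s - 2) * u x * g (u x)
          ≤ |u x| ^ (2 / s - 2) * u x * ((s - τ) * u x) :=
            mul_le_mul_of_nonneg_left hw (mul_nonneg (Real.rpow_nonneg (abs_nonneg _) _) h.le)
        _ = (s - τ) * (|u x| ^ (2 / s - 2) * u x * u x) := by ring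
        _ = (s - τ) * |u x| ^ (2 / s) := by rw [habs_mul hq2]
  -- T3 identity
  have hT3 : (∫ x : E2, (∫ y : E2, Galpha α (x - y) * Fprim f (u y)) * f (u x) * g (u x))
      = Aint α f u := by
    have h1 : ∀ x : E2, (∫ y : E2, Galpha α (x - y) * Fprim f (u y)) * f (u x) * g (u x)
        = ∫ y : E2, Galpha α (x - y) * Fprim f (u x) * Fprim f (u y) := by
      intro x
      rw [mul_assoc, hgid (u x),
        mul_comm (∫ y : E2, Galpha α (x - y) * Fprim f (u y)) (Fprim f (u x)),
        ← integral_const_mul]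
      congr 1
      funext y
      ring
    rw [Aint]
    simp only [h1]
  refine ⟨hMemw, hWw, ?_⟩
  simp only [Ider]
  rw [hT3, Wnorm_rpow hs0]
  linarith [hT1, hT2]

end Aux19

theorem statement_19 (s α τ c : ℝ) (hs : s ∈ Set.Ioo (0:ℝ) 1)
    (hα : α ∈ Set.Ioc (0:ℝ) 1) (hτ : τ ∈ Set.Ioo (0:ℝ) s) (hc : c ∈ Set.Ioo (0:ℝ) (s / 4))
    (f : ℝ → ℝ) (αstar b₁ b₂ : ℝ)
    (hf1 : Cond_f1 s f) (hf2 : Cond_f2 s αstar b₁ b₂ f)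
    (hf3 : Cond_f3 s τ f) (hf4 : Cond_f4 f)
    (u : ℕ → E2 → ℝ) (humem : ∀ n, MemW s (u n))
    (hlevel : Tendsto (fun n => Ifun s α f (u n)) atTop (nhds c))
    (hcerami : ∃ ε : ℕ → ℝ, Tendsto ε atTop (nhds 0) ∧
        ∀ n : ℕ, ∀ v : E2 → ℝ, MemW s v → Wnorm s v ≤ 1 →
          (1 + Wnorm s (u n)) * |Ider s α f (u n) v| ≤ ε n) :
    (∃ N : ℕ, ∀ n ≥ N, Wnorm s (u n) ^ (2 / s) < s / τ) ∧
    ∃ C : ℝ, 0 < C ∧ ∀ n : ℕ,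
      |∫ x : E2, ∫ y : E2, Galpha α (x - y) * Fprim f (u n x) * Fprim f (u n y)| ≤ C ∧
      |∫ x : E2, (∫ y : E2, Galpha α (x - y) * Fprim f (u n y)) * f (u n x) * u n x| ≤ C := by
  obtain ⟨hs0, hs1⟩ := hs
  obtain ⟨hα0, hα1⟩ := hα
  obtain ⟨hτ0, hτs⟩ := hτ
  obtain ⟨hc0, hcs⟩ := hc
  obtain ⟨hfC, hfnn, hf0, -⟩ := hf1
  have hfpos : ∀ t : ℝ, 0 < t → 0 < f t := fun t ht => (hf2.2.2.2 t ht).1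
  obtain ⟨ε, hε0, hεB⟩ := hcerami
  set m : ℝ := max (s - τ) (muST s τ) with hmdef
  have hm0 : 0 < m := lt_max_of_lt_left (by linarith)
  have hπ : (0:ℝ) < π := Real.pi_pos
  -- the auxiliary function g = F/f and its properties
  have hgm : Measurable (fun t => Fprim f t / f t) :=
    (Aux19.Fprim_continuous hfC.continuous).measurable.div hfC.continuous.measurable
  have hg0' := Aux19.g_zero (f := f) hf0
  have hgK' := Aux19.gK hs0 hτ0 hτs hfC hf0 hfnn hfpos hf3
  have hgU' := Aux19.gU hs0 hτ0 hτs hfC hf0 hfnn hfpos hf3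
  have hgLip' := Aux19.gLip hs0 hs1 hτ0 hτs hfC hf0 hfnn hfpos hf3
  have hgid' := Aux19.g_id hf0 hfpos
  have hper := fun n => Aux19.per_u s τ α f hs0 hs1 hτ0 hτs m hm0
    (fun t => Fprim f t / f t) hgm hg0' hgK' hgU' hgLip' hgid' (u n) (humem n)
  have hIfun_eq : ∀ v : E2 → ℝ, Ifun s α f v
      = (s / 2) * Wnorm s v ^ (2 / s) - (1 / (4 * π)) * Aux19.Aint α f v := fun v => rfl
  have hW0 : ∀ n, 0 ≤ Wnorm s (u n) := fun n => Aux19.Wnorm_nonneg s (u n)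
  -- the Cerami bound applied to g ∘ u n
  have hIw : ∀ n, |Ider s α f (u n) (fun x => Fprim f (u n x) / f (u n x))| ≤ m * ε n := by
    intro n
    obtain ⟨hMw, hWw, -⟩ := hper n
    have h1W : (0:ℝ) < 1 + Wnorm s (u n) := by linarith [hW0 n]
    have hc0' : (0:ℝ) < m * (1 + Wnorm s (u n)) := by positivity
    have hv : MemW s (fun x => (m * (1 + Wnorm s (u n)))⁻¹ * (Fprim f (u n x) / f (u n x))) :=
      Aux19.MemW_smul hMw _
    have hvnorm : Wnorm s
        (fun x => (m * (1 + Wnorm s (u n)))⁻¹ * (Fprim f (u n x) / f (u n x))) ≤ 1 := by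
      rw [Aux19.Wnorm_smul hs0 _ (inv_nonneg.2 hc0'.le)]
      have h2 : Wnorm s (fun x => Fprim f (u n x) / f (u n x)) ≤ m * (1 + Wnorm s (u n)) := by
        refine hWw.trans ?_
        have := hW0 n
        nlinarith
      calc (m * (1 + Wnorm s (u n)))⁻¹ * Wnorm s (fun x => Fprim f (u n x) / f (u n x))
          ≤ (m * (1 + Wnorm s (u n)))⁻¹ * (m * (1 + Wnorm s (u n))) :=
            mul_le_mul_of_nonneg_left h2 (inv_nonneg.2 hc0'.le)
        _ = 1 := inv_mul_cancel₀ hc0'.ne'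
    have hcer := hεB n _ hv hvnorm
    rw [Aux19.Ider_smul, abs_mul, abs_of_nonneg (inv_nonneg.2 hc0'.le)] at hcer
    rw [show (1 + Wnorm s (u n)) * ((m * (1 + Wnorm s (u n)))⁻¹
        * |Ider s α f (u n) (fun x => Fprim f (u n x) / f (u n x))|)
        = |Ider s α f (u n) (fun x => Fprim f (u n x) / f (u n x))| / m by
      field_simp] at hcer
    rwa [div_le_iff₀ hm0, mul_comm] at hcer
  -- key inequality
  have hkeyn : ∀ n, τ * Wnorm s (u n) ^ (2 / s) ≤ 2 * Ifun s α f (u n) + m * ε n := by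
    intro n
    obtain ⟨-, -, hkey⟩ := hper n
    have hIb := hIw n
    have hAeq : (1 / (2 * π)) * Aux19.Aint α f (u n)
        = s * Wnorm s (u n) ^ (2 / s) - 2 * Ifun s α f (u n) := by
      rw [hIfun_eq (u n)]; ring
    rw [hAeq] at hkey
    have habs := neg_abs_le (Ider s α f (u n) (fun x => Fprim f (u n x) / f (u n x)))
    linarith
  -- eventual bounds
  have hconv : Tendsto (fun n => 2 * Ifun s α f (u n) + m * ε n) atTop (nhds (2 * c + m * 0)) :=
    (hlevel.const_mul 2).add (hε0.const_mul m)
  have h2c : 2 * c + m * 0 < s := by rw [mul_zero, add_zero]; linarith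
  have hev1 : ∀ᶠ n in atTop, 2 * Ifun s α f (u n) + m * ε n < s :=
    hconv.eventually_lt_const h2c
  have hNbound : ∀ n, 2 * Ifun s α f (u n) + m * ε n < s →
      Wnorm s (u n) ^ (2 / s) < s / τ := by
    intro n hn
    have := hkeyn n
    rw [lt_div_iff₀ hτ0]
    linarith
  obtain ⟨N₀, hN₀⟩ := eventually_atTop.1 hev1
  refine ⟨⟨N₀, fun n hn => hNbound n (hN₀ n hn)⟩, ?_⟩
  -- Cerami bound applied to u n itself
  have hIderself : ∀ n, |Ider s α f (u n) (u n)| ≤ ε n := by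
    intro n
    have h1W : (0:ℝ) < 1 + Wnorm s (u n) := by linarith [hW0 n]
    have hv : MemW s (fun x => (1 + Wnorm s (u n))⁻¹ * u n x) := Aux19.MemW_smul (humem n) _
    have hvnorm : Wnorm s (fun x => (1 + Wnorm s (u n))⁻¹ * u n x) ≤ 1 := by
      rw [Aux19.Wnorm_smul hs0 _ (inv_nonneg.2 h1W.le)]
      calc (1 + Wnorm s (u n))⁻¹ * Wnorm s (u n)
          ≤ (1 + Wnorm s (u n))⁻¹ * (1 + Wnorm s (u n)) :=
            mul_le_mul_of_nonneg_left (by linarith) (inv_nonneg.2 h1W.le)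
        _ = 1 := inv_mul_cancel₀ h1W.ne'
    have hcer := hεB n _ hv hvnorm
    rw [Aux19.Ider_smul, abs_mul, abs_of_nonneg (inv_nonneg.2 h1W.le)] at hcer
    rwa [show (1 + Wnorm s (u n)) * ((1 + Wnorm s (u n))⁻¹ * |Ider s α f (u n) (u n)|)
        = |Ider s α f (u n) (u n)| by field_simp] at hcer
  have hBeq : ∀ n, Aux19.Bint α f (u n)
      = 2 * π * (Wnorm s (u n) ^ (2 / s) - Ider s α f (u n) (u n)) := by
    intro n
    have h := Aux19.Ider_self hs0 hs1 α f (u n)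
    have h2 : (1 / (2 * π)) * Aux19.Bint α f (u n)
        = Wnorm s (u n) ^ (2 / s) - Ider s α f (u n) (u n) := by rw [h]; ring
    have h3 : Aux19.Bint α f (u n) = 2 * π * ((1 / (2 * π)) * Aux19.Bint α f (u n)) := by
      field_simp
    rw [h3, h2]
  have hAeq2 : ∀ n, Aux19.Aint α f (u n)
      = 4 * π * ((s / 2) * Wnorm s (u n) ^ (2 / s) - Ifun s α f (u n)) := by
    intro n
    have h2 : (1 / (4 * π)) * Aux19.Aint α f (u n)
        = (s / 2) * Wnorm s (u n) ^ (2 / s) - Ifun s α f (u n) := by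
      rw [hIfun_eq (u n)]; ring
    have h3 : Aux19.Aint α f (u n) = 4 * π * ((1 / (4 * π)) * Aux19.Aint α f (u n)) := by
      field_simp
    rw [h3, h2]
  have hev2 : ∀ᶠ n in atTop, |Ifun s α f (u n)| < |c| + 1 :=
    (hlevel.abs).eventually_lt_const (lt_add_one |c|)
  have hev3 : ∀ᶠ n in atTop, ε n < 1 := hε0.eventually_lt_const one_pos
  obtain ⟨N₁, hN₁⟩ := eventually_atTop.1 ((hev1.and hev2).and hev3)
  set K1 : ℝ := max (4 * π * ((s / 2) * (s / τ) + (|c| + 1))) (2 * π * (s / τ + 1)) with hK1def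
  have hbig : ∀ n, N₁ ≤ n → |Aux19.Aint α f (u n)| ≤ K1 ∧ |Aux19.Bint α f (u n)| ≤ K1 := by
    intro n hn
    obtain ⟨⟨h1, h2⟩, h3⟩ := hN₁ n hn
    have hNlt : Wnorm s (u n) ^ (2 / s) < s / τ := hNbound n h1
    have hNn0 : 0 ≤ Wnorm s (u n) ^ (2 / s) := Real.rpow_nonneg (hW0 n) _
    constructor
    · rw [hAeq2 n, abs_mul, abs_of_pos (by positivity : (0:ℝ) < 4 * π)]
      have hx : |(s / 2) * Wnorm s (u n) ^ (2 / s) - Ifun s α f (u n)|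
          ≤ (s / 2) * (s / τ) + (|c| + 1) := by
        have t1 := abs_sub ((s / 2) * Wnorm s (u n) ^ (2 / s)) (Ifun s α f (u n))
        have t2 : |(s / 2) * Wnorm s (u n) ^ (2 / s)| = (s / 2) * Wnorm s (u n) ^ (2 / s) :=
          abs_of_nonneg (by positivity)
        have t3 : (s / 2) * Wnorm s (u n) ^ (2 / s) ≤ (s / 2) * (s / τ) :=
          mul_le_mul_of_nonneg_left hNlt.le (by linarith)
        linarith
      calc (4 * π) * |(s / 2) * Wnorm s (u n) ^ (2 / s) - Ifun s α f (u n)|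
          ≤ (4 * π) * ((s / 2) * (s / τ) + (|c| + 1)) :=
            mul_le_mul_of_nonneg_left hx (by positivity)
        _ ≤ K1 := by rw [hK1def]; exact le_max_left _ _
    · rw [hBeq n, abs_mul, abs_of_pos (by positivity : (0:ℝ) < 2 * π)]
      have hd := hIderself n
      have hx : |Wnorm s (u n) ^ (2 / s) - Ider s α f (u n) (u n)| ≤ s / τ + 1 := by
        have t1 := abs_sub (Wnorm s (u n) ^ (2 / s)) (Ider s α f (u n) (u n))
        have t2 : |Wnorm s (u n) ^ (2 / s)| = Wnorm s (u n) ^ (2 / s) :=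
          abs_of_nonneg hNn0
        linarith
      calc (2 * π) * |Wnorm s (u n) ^ (2 / s) - Ider s α f (u n) (u n)|
          ≤ (2 * π) * (s / τ + 1) := mul_le_mul_of_nonneg_left hx (by positivity)
        _ ≤ K1 := by rw [hK1def]; exact le_max_right _ _
  set K2 : ℝ := (Finset.range (N₁ + 1)).sup' Finset.nonempty_range_add_one
      (fun k => max |Aux19.Aint α f (u k)| |Aux19.Bint α f (u k)|) with hK2def
  have hK2 : ∀ k, k ≤ N₁ → max |Aux19.Aint α f (u k)| |Aux19.Bint α f (u k)| ≤ K2 := by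
    intro k hk
    rw [hK2def]
    exact Finset.le_sup' (fun k => max |Aux19.Aint α f (u k)| |Aux19.Bint α f (u k)|)
      (Finset.mem_range.2 (Nat.lt_succ_of_le hk))
  have hK20 : (0:ℝ) ≤ K2 :=
    le_trans (abs_nonneg _) (le_trans (le_max_left _ _) (hK2 0 (Nat.zero_le _)))
  refine ⟨max K1 K2 + 1, by linarith [le_max_right K1 K2], fun n => ?_⟩
  rcases le_or_gt n N₁ with h | h
  · have hk := hK2 n h
    exact ⟨le_trans (le_trans (le_max_left _ _) hk) (by linarith [le_max_right K1 K2]),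
      le_trans (le_trans (le_max_right _ _) hk) (by linarith [le_max_right K1 K2])⟩
  · have hb := hbig n h.le
    exact ⟨hb.1.trans (by linarith [le_max_left K1 K2]),
      hb.2.trans (by linarith [le_max_left K1 K2])⟩
end
end
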